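/- arXiv:2106.00701 — 6 statements merged into one kernel-verified Lean document; each statement's English description precedes it below -/
import Mathlib

section
/- Let Γ be a digraph of order n ≥ 2 with Laplacian L, and let Q be a restrictor matrix of order n. If Γ is polygonal, i.e. W_r(L) equals the convex hull (over ℝ, viewing ℂ as a real vector space) of the spectrum of QᴴLQ, then the algebraic connectivity α(Γ) equals the minimum of the real parts of the eigenvalues of QᴴLQ. -/
open Matrix

/-- A 0/1 adjacency matrix with zero diagonal. -/
def IsAdj {m : Type*} [Fintype m] (A : Matrix m m ℝ) : Prop :=
  (∀ i j, A i j = 0 ∨ A i j = 1) ∧ ∀ i, A i i = 0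

/-- Laplacian of a digraph: `L i i = d⁺(i)` and `L i j = -A i j` for `i ≠ j`. -/
noncomputable def lap {m : Type*} [Fintype m] [DecidableEq m] (A : Matrix m m ℝ) :
    Matrix m m ℝ :=
  Matrix.diagonal (fun i => ∑ j, A i j) - A

/-- Complexified Laplacian. -/
noncomputable def lapC {m : Type*} [Fintype m] [DecidableEq m] (A : Matrix m m ℝ) :
    Matrix m m ℂ :=
  (lap A).map (fun x => (x : ℂ))

/-- Restricted numerical range `W_r(M) = { xᴴ M x : ‖x‖ = 1, xᴴ e = 0 }`. -/
noncomputable def rnr {m : Type*} [Fintype m] (M : Matrix m m ℂ) : Set ℂ :=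
  { z | ∃ x : EuclideanSpace ℂ m, ‖x‖ = 1 ∧ star (x : m → ℂ) ⬝ᵥ (fun _ => (1 : ℂ)) = 0 ∧
      z = star (x : m → ℂ) ⬝ᵥ M.mulVec (x : m → ℂ) }

/-- Restrictor matrix: orthonormal columns, all orthogonal to the all-ones vector. -/
def IsRestrictor {m k : Type*} [Fintype m] [Fintype k] [DecidableEq k]
    (Q : Matrix m k ℂ) : Prop :=
  Qᴴ * Q = 1 ∧ Qᴴ *ᵥ (fun _ => (1 : ℂ)) = 0

/-- Normal matrix: `Mᴴ M = M Mᴴ` (for real matrices, `Mᵀ M = M Mᵀ`). -/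
def IsNormalM {m R : Type*} [Fintype m] [Mul (Matrix m m R)] [Star (Matrix m m R)]
    (M : Matrix m m R) : Prop := star M * M = M * star M

/-- Balanced digraph: `d⁺(i) = d⁻(i)` for every vertex. -/
def Bal {m : Type*} [Fintype m] (A : Matrix m m ℝ) : Prop :=
  ∀ i, ∑ j, A i j = ∑ j, A j i

/-- Algebraic connectivity `α(Γ) = min { xᵀ L x : x ∈ ℝⁿ, ‖x‖ = 1, xᵀ e = 0 }`. -/
noncomputable def algConn {m : Type*} [Fintype m] (L : Matrix m m ℝ) : ℝ :=
  sInf { r | ∃ x : EuclideanSpace ℝ m, ‖x‖ = 1 ∧ (x : m → ℝ) ⬝ᵥ (fun _ => (1 : ℝ)) = 0 ∧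
      r = (x : m → ℝ) ⬝ᵥ L.mulVec (x : m → ℝ) }
open Matrix

noncomputable def Sq {n : ℕ} (L : Matrix (Fin n) (Fin n) ℝ) : Set ℝ :=
  { r | ∃ x : EuclideanSpace ℝ (Fin n), ‖x‖ = 1 ∧ (x : Fin n → ℝ) ⬝ᵥ (fun _ => (1 : ℝ)) = 0 ∧
      r = (x : Fin n → ℝ) ⬝ᵥ L.mulVec (x : Fin n → ℝ) }

lemma eucl_norm_sq {n : ℕ} (x : EuclideanSpace ℝ (Fin n)) : ∑ i, x i ^ 2 = ‖x‖ ^ 2 := by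
  rw [EuclideanSpace.norm_eq, Real.sq_sqrt (by positivity)]
  simp [sq_abs]

lemma Sq_bddBelow {n : ℕ} (L : Matrix (Fin n) (Fin n) ℝ) : BddBelow (Sq L) := by
  refine ⟨-(∑ i, ∑ j, |L i j|), ?_⟩
  rintro r ⟨x, hx1, -, rfl⟩
  have hxi : ∀ i, |x i| ≤ 1 := by
    intro i
    have h1 : x i ^ 2 ≤ ∑ j, x j ^ 2 :=
      Finset.single_le_sum (f := fun j => x j ^ 2) (fun j _ => sq_nonneg _) (Finset.mem_univ i)
    rw [eucl_norm_sq, hx1] at h1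
    nlinarith [abs_nonneg (x i), sq_abs (x i)]
  have hb : |(x : Fin n → ℝ) ⬝ᵥ L.mulVec x| ≤ ∑ i, ∑ j, |L i j| := by
    simp only [dotProduct, mulVec]
    calc |∑ i, x i * ∑ j, L i j * x j| ≤ ∑ i, |x i * ∑ j, L i j * x j| :=
          Finset.abs_sum_le_sum_abs _ _
      _ ≤ ∑ i, ∑ j, |L i j| := by
          refine Finset.sum_le_sum fun i _ => ?_
          rw [abs_mul]
          calc |x i| * |∑ j, L i j * x j| ≤ 1 * (∑ j, |L i j * x j|) :=
                mul_le_mul (hxi i) (Finset.abs_sum_le_sum_abs _ _) (abs_nonneg _) zero_le_one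
            _ = ∑ j, |L i j| * |x j| := by simp [abs_mul]
            _ ≤ ∑ j, |L i j| * 1 :=
                Finset.sum_le_sum fun j _ => mul_le_mul_of_nonneg_left (hxi j) (abs_nonneg _)
            _ = ∑ j, |L i j| := by simp
  linarith [neg_abs_le ((x : Fin n → ℝ) ⬝ᵥ L.mulVec x)]

lemma quad_lower {n : ℕ} (L : Matrix (Fin n) (Fin n) ℝ) (u : Fin n → ℝ)
    (hu : u ⬝ᵥ (fun _ => (1 : ℝ)) = 0) :
    sInf (Sq L) * (∑ i, u i ^ 2) ≤ u ⬝ᵥ L.mulVec u := by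
  rcases eq_or_ne u 0 with rfl | hu0
  · simp [dotProduct, mulVec]
  · obtain ⟨i0, hi0⟩ := Function.ne_iff.mp hu0
    have hsum_pos : 0 < ∑ i, u i ^ 2 := by
      have h1 : u i0 ^ 2 ≤ ∑ j, u j ^ 2 :=
        Finset.single_le_sum (f := fun j => u j ^ 2) (fun j _ => sq_nonneg _) (Finset.mem_univ i0)
    -- positivity
      have h2 : 0 < u i0 ^ 2 := lt_of_le_of_ne (sq_nonneg _) (Ne.symm (pow_ne_zero 2 hi0))
      linarith
    set t : ℝ := Real.sqrt (∑ i, u i ^ 2) with ht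
    have htpos : 0 < t := Real.sqrt_pos.mpr hsum_pos
    have ht2 : t ^ 2 = ∑ i, u i ^ 2 := Real.sq_sqrt hsum_pos.le
    set x : EuclideanSpace ℝ (Fin n) := WithLp.toLp 2 (fun i => t⁻¹ * u i) with hx
    have hxnorm : ‖x‖ = 1 := by
      rw [EuclideanSpace.norm_eq]
      have h3 : ∑ i, ‖x i‖ ^ 2 = t⁻¹ ^ 2 * ∑ i, u i ^ 2 := by
        simp [hx, mul_pow, Finset.mul_sum, sq_abs]
      rw [h3, ← ht2]
      rw [Real.sqrt_eq_one]
      field_simp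
    have hu' : ∑ i, u i = 0 := by simpa [dotProduct] using hu
    have hx1 : (x : Fin n → ℝ) ⬝ᵥ (fun _ => (1 : ℝ)) = 0 := by
      simp [dotProduct, hx, ← Finset.mul_sum, hu']
    have hval : (x : Fin n → ℝ) ⬝ᵥ L.mulVec x = t⁻¹ ^ 2 * (u ⬝ᵥ L.mulVec u) := by
      simp only [dotProduct, mulVec, hx, Finset.mul_sum]
      refine Finset.sum_congr rfl fun i _ => Finset.sum_congr rfl fun j _ => ?_
      ring
    have hmem : t⁻¹ ^ 2 * (u ⬝ᵥ L.mulVec u) ∈ Sq L := ⟨x, hxnorm, hx1, hval.symm⟩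
    have h := csInf_le (Sq_bddBelow L) hmem
    have h4 := mul_le_mul_of_nonneg_right h (le_of_lt (pow_pos htpos 2))
    calc sInf (Sq L) * (∑ i, u i ^ 2) = sInf (Sq L) * t ^ 2 := by rw [ht2]
      _ ≤ t⁻¹ ^ 2 * (u ⬝ᵥ L.mulVec u) * t ^ 2 := h4
      _ = u ⬝ᵥ L.mulVec u := by field_simp

lemma re_quad {n : ℕ} (A : Matrix (Fin n) (Fin n) ℝ) (x : Fin n → ℂ) :
    (star x ⬝ᵥ (lapC A).mulVec x).re =
      (fun i => (x i).re) ⬝ᵥ (lap A).mulVec (fun i => (x i).re) +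
      (fun i => (x i).im) ⬝ᵥ (lap A).mulVec (fun i => (x i).im) := by
  simp only [dotProduct, mulVec, lapC, Matrix.map_apply, Pi.star_apply, Finset.mul_sum,
    Complex.re_sum, ← Finset.sum_add_distrib]
  refine Finset.sum_congr rfl fun i _ => Finset.sum_congr rfl fun j _ => ?_
  simp only [Complex.mul_re, Complex.mul_im, RCLike.star_def, Complex.conj_re, Complex.conj_im,
    Complex.ofReal_re, Complex.ofReal_im]
  ring
section MainProof
open Finset

private lemma fin_spectrum_nonempty {k : ℕ} (hk : 1 ≤ k) (B : Matrix (Fin k) (Fin k) ℂ) :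
    (spectrum ℂ B).Nonempty := by
  haveI : Nonempty (Fin k) := ⟨⟨0, hk⟩⟩
  obtain ⟨μ, hμ⟩ := Module.End.exists_eigenvalue (Matrix.toLinAlgEquiv' B)
  refine ⟨μ, ?_⟩
  rw [← AlgEquiv.spectrum_eq (Matrix.toLinAlgEquiv' (R := ℂ) (n := Fin k)) B]
  exact Module.End.hasEigenvalue_iff_mem_spectrum.mp hμ

/-- If `Γ` is polygonal, then the algebraic connectivity `α(Γ)` equals the
minimum of the real parts of the eigenvalues of `QᴴLQ`. -/
theorem algConn_eq_min_re_of_polygonal {n : ℕ} (hn : 2 ≤ n)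
    (A : Matrix (Fin n) (Fin n) ℝ) (hA : IsAdj A)
    (Q : Matrix (Fin n) (Fin (n - 1)) ℂ) (hQ : IsRestrictor Q)
    (hpoly : rnr (lapC A) = convexHull ℝ (spectrum ℂ (Qᴴ * lapC A * Q))) :
    algConn (lap A) = sInf { r | ∃ μ ∈ spectrum ℂ (Qᴴ * lapC A * Q), r = μ.re } := by
  classical
  set Sp := spectrum ℂ (Qᴴ * lapC A * Q) with hSp
  set T : Set ℝ := { r | ∃ μ ∈ Sp, r = μ.re } with hT
  show sInf (Sq (lap A)) = sInf T
  -- S nonempty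
  have hSne : (Sq (lap A)).Nonempty := by
    set i0 : Fin n := ⟨0, by omega⟩
    set i1 : Fin n := ⟨1, by omega⟩
    have h01 : i0 ≠ i1 := by simp [i0, i1, Fin.ext_iff]
    set c : ℝ := (Real.sqrt 2)⁻¹ with hc
    have hc2 : c ^ 2 = 2⁻¹ := by
      rw [hc, inv_pow, Real.sq_sqrt (by norm_num : (0:ℝ) ≤ 2)]
    set x : EuclideanSpace ℝ (Fin n) := WithLp.toLp 2 (fun i => if i = i0 then c else if i = i1 then -c else 0)
      with hxdef
    have hsplit : ∀ (a b : ℝ), ∀ i : Fin n,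
        (if i = i0 then a else if i = i1 then b else 0) =
          (if i = i0 then a else 0) + (if i = i1 then b else 0) := by
      intro a b i
      by_cases h0 : i = i0
      · subst h0; simp [h01]
      · by_cases h1 : i = i1
        · subst h1; simp [h0]
        · simp [h0, h1]
    have hxnorm : ‖x‖ = 1 := by
      rw [EuclideanSpace.norm_eq]
      have : ∑ i, ‖x i‖ ^ 2 = 1 := by
        have hx2 : ∀ i, ‖x i‖ ^ 2 = (if i = i0 then c ^ 2 else 0) +
            (if i = i1 then c ^ 2 else 0) := by
          intro i
          rw [← hsplit]
          by_cases h0 : i = i0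
          · subst h0; simp [x, sq_abs]
          · by_cases h1 : i = i1 <;> simp [x, h0, h1, sq_abs]
        rw [Finset.sum_congr rfl fun i _ => hx2 i, Finset.sum_add_distrib,
          Finset.sum_ite_eq' Finset.univ i0, Finset.sum_ite_eq' Finset.univ i1]
        simp [hc2]
        norm_num
      rw [this, Real.sqrt_one]
    have hxe : (x : Fin n → ℝ) ⬝ᵥ (fun _ => (1:ℝ)) = 0 := by
      simp only [dotProduct, mul_one]
      rw [Finset.sum_congr rfl fun i _ => hsplit c (-c) i, Finset.sum_add_distrib,
        Finset.sum_ite_eq' Finset.univ i0, Finset.sum_ite_eq' Finset.univ i1]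
      simp
    exact ⟨_, x, hxnorm, hxe, rfl⟩
  -- every element of the restricted numerical range has real part ≥ sInf S
  have key1 : ∀ z ∈ rnr (lapC A), sInf (Sq (lap A)) ≤ z.re := by
    rintro z ⟨x, hx1, hxe, rfl⟩
    set u : Fin n → ℝ := fun i => (x i).re with hu
    set v : Fin n → ℝ := fun i => (x i).im with hv
    have hre := re_quad A x
    have hxe' : ∑ i, (starRingEnd ℂ) (x i) = 0 := by
      simpa [dotProduct] using hxe
    have hu0 : ∑ i, u i = 0 := by
      have := congrArg Complex.re hxe'
      simpa [Complex.re_sum] using this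
    have hv0 : ∑ i, v i = 0 := by
      have := congrArg Complex.im hxe'
      simp only [Complex.im_sum, Complex.conj_im, Complex.zero_im] at this
      simpa [Finset.sum_neg_distrib, neg_eq_zero] using this
    have hue : u ⬝ᵥ (fun _ => (1:ℝ)) = 0 := by simpa [dotProduct] using hu0
    have hve : v ⬝ᵥ (fun _ => (1:ℝ)) = 0 := by simpa [dotProduct] using hv0
    have hsum : ∑ i, u i ^ 2 + ∑ i, v i ^ 2 = 1 := by
      have h := hx1
      rw [EuclideanSpace.norm_eq, Real.sqrt_eq_one] at h
      rw [← Finset.sum_add_distrib]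
      rw [← h]
      refine Finset.sum_congr rfl fun i _ => ?_
      rw [Complex.sq_norm, Complex.normSq_apply]
      simp [u, v]
      ring
    have h1 := quad_lower (lap A) u hue
    have h2 := quad_lower (lap A) v hve
    have h3 : sInf (Sq (lap A)) * (∑ i, u i ^ 2) + sInf (Sq (lap A)) * (∑ i, v i ^ 2)
        = sInf (Sq (lap A)) := by rw [← mul_add, hsum, mul_one]
    rw [hre]
    linarith
  -- T nonempty & bounded below
  have hTne : T.Nonempty := by
    obtain ⟨μ, hμ⟩ := fin_spectrum_nonempty (k := n - 1) (by omega) (Qᴴ * lapC A * Q)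
    exact ⟨μ.re, μ, hμ, rfl⟩
  have hTlb : ∀ r ∈ T, sInf (Sq (lap A)) ≤ r := by
    rintro r ⟨μ, hμ, rfl⟩
    exact key1 μ (hpoly ▸ subset_convexHull ℝ Sp hμ)
  have hTbdd : BddBelow T := ⟨sInf (Sq (lap A)), hTlb⟩
  refine le_antisymm (le_csInf hTne hTlb) (le_csInf hSne ?_)
  rintro r ⟨x, hx1, hxe, rfl⟩
  set y : EuclideanSpace ℂ (Fin n) := WithLp.toLp 2 (fun i => ((x i : ℝ) : ℂ)) with hy
  have hy1 : ‖y‖ = 1 := by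
    rw [EuclideanSpace.norm_eq] at hx1 ⊢
    simpa [hy] using hx1
  have hx' : ∑ i, x i = 0 := by simpa [dotProduct] using hxe
  have hye : star (y : Fin n → ℂ) ⬝ᵥ (fun _ => (1:ℂ)) = 0 := by
    simp only [dotProduct, Pi.star_apply, hy, RCLike.star_def, Complex.conj_ofReal, mul_one]
    exact_mod_cast hx'
  have hval : (star (y : Fin n → ℂ) ⬝ᵥ (lapC A).mulVec (y : Fin n → ℂ)).re
      = (x : Fin n → ℝ) ⬝ᵥ (lap A).mulVec (x : Fin n → ℝ) := by
    rw [re_quad]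
    have e1 : (fun i => (y i).re) = (x : Fin n → ℝ) := by
      funext i; simp [hy]
    have e2 : (fun i => (y i).im) = fun _ => (0:ℝ) := by
      funext i; simp [hy]
    rw [e1, e2]
    simp [dotProduct]
  have hzmem : star (y : Fin n → ℂ) ⬝ᵥ (lapC A).mulVec (y : Fin n → ℂ) ∈ convexHull ℝ Sp := by
    rw [← hpoly]
    exact ⟨y, hy1, hye, rfl⟩
  have h3 : (star (y : Fin n → ℂ) ⬝ᵥ (lapC A).mulVec (y : Fin n → ℂ)).re
      ∈ Complex.reLm '' (convexHull ℝ Sp) := ⟨_, hzmem, rfl⟩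
  rw [Complex.reLm.image_convexHull] at h3
  have hTeq : Complex.reLm '' Sp = T := by
    ext r
    constructor
    · rintro ⟨μ, hμ, rfl⟩; exact ⟨μ, hμ, rfl⟩
    · rintro ⟨μ, hμ, rfl⟩; exact ⟨μ, hμ, rfl⟩
  rw [hTeq] at h3
  have hsub : convexHull ℝ T ⊆ Set.Ici (sInf T) :=
    convexHull_min (fun s hs => csInf_le hTbdd hs) (convex_Ici _)
  have := hsub h3
  rw [← hval]
  exact this

end MainProof
end

section
/- Let Γ be a digraph of order n ≥ 2 with Laplacian L, and let Q be a restrictor matrix of order n. If Γ is polygonal, i.e. W_r(L) equals the convex hull (over ℝ) of the spectrum of QᴴLQ, then the algebraic connectivity α(Γ) equals 0 if and only if 0 is an eigenvalue of QᴴLQ, equivalently if and only if the multiplicity of 0 as a root of the characteristic polynomial of L is at least 2. -/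
open Matrix Polynomial

namespace DigraphAux

variable {k : Type*} [Fintype k] [DecidableEq k]




lemma charmatrix_map_eval (M : Matrix k k ℂ) (z : ℂ) :
    (charmatrix M).map (Polynomial.eval z) = Matrix.diagonal (fun _ => z) - M := by
  ext i j
  by_cases h : i = j <;> simp [h, charmatrix_apply, Matrix.diagonal_apply]

lemma charpoly_eval (M : Matrix k k ℂ) (z : ℂ) :
    M.charpoly.eval z = (Matrix.diagonal (fun _ => z) - M).det := by
  have := RingHom.map_det (Polynomial.evalRingHom z) (charmatrix M)
  rw [Matrix.charpoly]
  simpa [charmatrix_map_eval] using this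

lemma mem_spectrum_iff' (M : Matrix k k ℂ) (z : ℂ) :
    z ∈ spectrum ℂ M ↔ M.charpoly.eval z = 0 := by
  rw [spectrum.mem_iff, Matrix.isUnit_iff_isUnit_det, isUnit_iff_ne_zero, not_ne_iff,
    charpoly_eval]
  congr! 2

lemma hasEigenvalue_of_mem_spectrum {M : Matrix k k ℂ} {z : ℂ} (h : z ∈ spectrum ℂ M) :
    Module.End.HasEigenvalue (Matrix.toLin' M) z := by
  have hdet : (Matrix.diagonal (fun _ => z) - M).det = 0 := by
    rw [← charpoly_eval, ← mem_spectrum_iff']; exact h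
  obtain ⟨v, hv0, hv⟩ := Matrix.exists_mulVec_eq_zero_iff.mpr hdet
  have hMv : M *ᵥ v = z • v := by
    rw [Matrix.sub_mulVec, sub_eq_zero] at hv
    rw [← hv]
    ext i
    simp [Matrix.mulVec_diagonal]
  refine Module.End.hasEigenvalue_of_hasEigenvector ⟨?_, hv0⟩
  rw [Module.End.mem_eigenspace_iff, Matrix.toLin'_apply, hMv]

lemma lapC_spectrum_re {n : ℕ} (A : Matrix (Fin n) (Fin n) ℝ) (hA : IsAdj A) {z : ℂ}
    (hz : z ∈ spectrum ℂ (lapC A)) : 0 ≤ z.re ∧ (z.re = 0 → z = 0) := by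
  obtain ⟨j, hj⟩ := _root_.eigenvalue_mem_ball (hasEigenvalue_of_mem_spectrum hz)
  set d : ℝ := ∑ l, A j l with hd
  have hAnn : ∀ a b, 0 ≤ A a b := by
    intro a b; rcases hA.1 a b with h | h <;> rw [h] <;> norm_num
  have hd0 : 0 ≤ d := Finset.sum_nonneg fun l _ => hAnn j l
  have hdiag : lapC A j j = (d : ℂ) := by
    simp [lapC, lap, Matrix.diagonal_apply, hA.2 j, hd]
  have hrad : ∑ l ∈ Finset.univ.erase j, ‖lapC A j l‖ = d := by
    have : ∀ l ∈ Finset.univ.erase j, ‖lapC A j l‖ = A j l := by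
      intro l hl
      have hlj : l ≠ j := Finset.ne_of_mem_erase hl
      have : lap A j l = -A j l := by
        simp [lap, Matrix.diagonal_apply, (Ne.symm hlj : j ≠ l)]
      simp [lapC, this, abs_of_nonneg (hAnn j l)]
    rw [Finset.sum_congr rfl this, hd]
    rw [← Finset.sum_erase_add _ _ (Finset.mem_univ j), hA.2 j, add_zero]
  rw [hdiag, hrad, Metric.mem_closedBall, Complex.dist_eq] at hj
  have h2 : ‖z - (d : ℂ)‖ ^ 2 ≤ d ^ 2 := by
    have := pow_le_pow_left₀ (norm_nonneg (z - (d:ℂ))) hj 2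
    simpa using this
  have h3 : (z.re - d) ^ 2 + z.im ^ 2 ≤ d ^ 2 := by
    have hns : ‖z - (d:ℂ)‖ ^ 2 = (z.re - d) ^ 2 + z.im ^ 2 := by
      rw [Complex.sq_norm, Complex.normSq_apply]
      simp [Complex.sub_re, Complex.sub_im]
      ring
    rw [hns] at h2
    exact h2
  constructor
  · nlinarith [sq_nonneg z.re, sq_nonneg z.im, hd0]
  · intro h0
    have him : z.im = 0 := by nlinarith [sq_nonneg z.im]
    exact Complex.ext h0 him





lemma charpoly_mul_mul (V W M : Matrix k k ℂ) (h : V * W = 1) :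
    (V * M * W).charpoly = M.charpoly := by
  have key : charmatrix (V * M * W) = V.map C * charmatrix M * W.map C := by
    rw [charmatrix, charmatrix, mul_sub, sub_mul]
    congr 1
    · rw [← (Matrix.scalar_commute (X : ℂ[X]) (fun r => Commute.all _ r) (V.map C)).eq,
        mul_assoc, ← Matrix.map_mul, h]
      simp [Matrix.map_one]
    · simp only [RingHom.mapMatrix_apply]
      rw [Matrix.map_mul, Matrix.map_mul]
  rw [Matrix.charpoly, Matrix.charpoly, key, Matrix.det_mul, Matrix.det_mul]
  have h1 : (V.map C).det * (W.map C).det = 1 := by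
    rw [← Matrix.det_mul, ← Matrix.map_mul, h]
    simp [Matrix.map_one]
  calc (V.map C).det * (charmatrix M).det * (W.map C).det
      = (charmatrix M).det * ((V.map C).det * (W.map C).det) := by ring
    _ = (charmatrix M).det := by rw [h1, mul_one]

lemma row_sum_lapC {n : ℕ} (A : Matrix (Fin n) (Fin n) ℝ) (i : Fin n) :
    ∑ j, lapC A i j = 0 := by
  have h : ∑ j, lap A i j = 0 := by
    simp [lap, Matrix.sub_apply, Finset.sum_sub_distrib, Matrix.diagonal_apply]
  have : ∑ j, lapC A i j = ((∑ j, lap A i j : ℝ) : ℂ) := by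
    push_cast [lapC, Matrix.map_apply]
    rfl
  rw [this, h]
  simp

lemma colsum_Q {n : ℕ} (Q : Matrix (Fin n) (Fin (n-1)) ℂ) (hQ : IsRestrictor Q)
    (j : Fin (n-1)) : ∑ i, Q i j = 0 := by
  have h := congrFun hQ.2 j
  simp only [Matrix.mulVec, dotProduct, Matrix.conjTranspose_apply, mul_one,
    Pi.zero_apply] at h
  have h2 : (starRingEnd ℂ) (∑ i, Q i j) = 0 := by rw [map_sum]; exact h
  simpa using congrArg (starRingEnd ℂ) h2

lemma charpoly_factor {n : ℕ} (hn : 2 ≤ n) (A : Matrix (Fin n) (Fin n) ℝ)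
    (Q : Matrix (Fin n) (Fin (n-1)) ℂ) (hQ : IsRestrictor Q) :
    (lapC A).charpoly = X * (Qᴴ * lapC A * Q).charpoly := by
  classical
  have hn1 : 1 + (n - 1) = n := by omega
  let e : Fin 1 ⊕ Fin (n-1) ≃ Fin n := finSumFinEquiv.trans (finCongr hn1)
  set c : ℂ := (((Real.sqrt n)⁻¹ : ℝ) : ℂ) with hc
  let u : Matrix (Fin n) (Fin 1) ℂ := fun _ _ => c
  let uT : Matrix (Fin 1) (Fin n) ℂ := fun _ _ => c
  set L := lapC A with hL
  have hLu : L * u = 0 := by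
    ext i j
    simp only [Matrix.mul_apply, Matrix.zero_apply]
    simp only [u]
    rw [← Finset.sum_mul, hL, row_sum_lapC, zero_mul]
  have hnpos : (0:ℝ) < n := by exact_mod_cast (by omega : 0 < n)
  have hcc : (n : ℂ) * (c * c) = 1 := by
    rw [hc]
    have hr : (n : ℝ) * ((Real.sqrt n)⁻¹ * (Real.sqrt n)⁻¹) = 1 := by
      rw [← mul_inv, Real.mul_self_sqrt hnpos.le]
      field_simp
    exact_mod_cast hr
  have huu : uT * u = 1 := by
    ext i j
    have hij : i = j := Subsingleton.elim i j
    subst hij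
    simp only [Matrix.mul_apply]
    simp only [uT, u, Finset.sum_const, Finset.card_univ, Fintype.card_fin,
      nsmul_eq_mul, Matrix.one_apply_eq]
    exact hcc
  have hQu : Qᴴ * u = 0 := by
    ext j i
    simp only [Matrix.mul_apply, Matrix.conjTranspose_apply, Matrix.zero_apply]
    simp only [u]
    rw [← Finset.sum_mul]
    have h := congrFun hQ.2 j
    simp only [Matrix.mulVec, dotProduct, Matrix.conjTranspose_apply, mul_one,
      Pi.zero_apply] at h
    rw [h, zero_mul]
  have huQ : uT * Q = 0 := by
    ext i j
    simp only [Matrix.mul_apply, Matrix.zero_apply]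
    simp only [uT]
    rw [← Finset.mul_sum, colsum_Q Q hQ, mul_zero]
  have hQQ : Qᴴ * Q = 1 := hQ.1
  set F := Matrix.fromRows uT Qᴴ with hF
  set G := Matrix.fromCols u Q with hG
  let V : Matrix (Fin n) (Fin n) ℂ := F.submatrix ⇑e.symm id
  let W : Matrix (Fin n) (Fin n) ℂ := G.submatrix id ⇑e.symm
  have hsubA : ∀ (P : Matrix (Fin 1 ⊕ Fin (n-1)) (Fin n) ℂ)
      (R : Matrix (Fin n) (Fin 1 ⊕ Fin (n-1)) ℂ),
      P.submatrix ⇑e.symm id * R.submatrix id ⇑e.symm = (P * R).submatrix ⇑e.symm ⇑e.symm := by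
    intro P R; ext i j; simp [Matrix.mul_apply]
  have hsubB : ∀ (P : Matrix (Fin 1 ⊕ Fin (n-1)) (Fin n) ℂ) (R : Matrix (Fin n) (Fin n) ℂ),
      P.submatrix ⇑e.symm id * R = (P * R).submatrix ⇑e.symm id := by
    intro P R; ext i j; simp [Matrix.mul_apply]
  have hVW : V * W = 1 := by
    show F.submatrix ⇑e.symm id * G.submatrix id ⇑e.symm = 1
    rw [hsubA F G, hF, hG, Matrix.fromRows_mul_fromCols, huu, huQ, hQu, hQQ,
      Matrix.fromBlocks_one, Matrix.submatrix_one_equiv e.symm]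
  have hFLG : F * L * G = Matrix.fromBlocks 0 (uT * L * Q) 0 (Qᴴ * L * Q) := by
    have h1 : uT * L * u = 0 := by rw [Matrix.mul_assoc, hLu, Matrix.mul_zero]
    have h2 : Qᴴ * L * u = 0 := by rw [Matrix.mul_assoc, hLu, Matrix.mul_zero]
    rw [hF, hG, Matrix.fromRows_mul, Matrix.fromRows_mul_fromCols, h1, h2]
  have hVLW : V * L * W = (F * L * G).submatrix ⇑e.symm ⇑e.symm := by
    show F.submatrix ⇑e.symm id * L * G.submatrix id ⇑e.symm = _
    rw [hsubB F L, hsubA (F * L) G]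
  have hzero1 : (0 : Matrix (Fin 1) (Fin 1) ℂ).charpoly = X := by
    rw [Matrix.charpoly, Matrix.det_fin_one]
    simp [charmatrix_apply]
  calc (lapC A).charpoly = (V * L * W).charpoly := (charpoly_mul_mul V W L hVW).symm
    _ = ((Matrix.reindex e e (F * L * G))).charpoly := by
        rw [hVLW, Matrix.reindex_apply]
    _ = (F * L * G).charpoly := Matrix.charpoly_reindex e _
    _ = X * (Qᴴ * lapC A * Q).charpoly := by
        rw [hFLG, Matrix.charpoly_fromBlocks_zero₂₁, hzero1, hL]



/-- The set defining `algConn`. -/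
def algSet {m : Type*} [Fintype m] (L : Matrix m m ℝ) : Set ℝ :=
  { r | ∃ x : EuclideanSpace ℝ m, ‖x‖ = 1 ∧ (x : m → ℝ) ⬝ᵥ (fun _ => (1 : ℝ)) = 0 ∧
      r = (x : m → ℝ) ⬝ᵥ L.mulVec (x : m → ℝ) }

lemma algConn_eq {m : Type*} [Fintype m] (L : Matrix m m ℝ) : algConn L = sInf (algSet L) := rfl

lemma norm_sq_sum {m : Type*} [Fintype m] (x : EuclideanSpace ℝ m) (h : ‖x‖ = 1) :
    ∑ i, (x : m → ℝ) i ^ 2 = 1 := by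
  have h1 := EuclideanSpace.norm_eq x
  rw [h] at h1
  have h2 : ∑ i, ‖(x : m → ℝ) i‖ ^ 2 = 1 := by
    rw [← Real.sqrt_eq_one.mp h1.symm]
  simpa [Real.norm_eq_abs, sq_abs] using h2

lemma bddBelow_algSet {m : Type*} [Fintype m] (L : Matrix m m ℝ) :
    BddBelow (algSet L) := by
  classical
  refine ⟨-(∑ i, ∑ j, |L i j|), ?_⟩
  rintro r ⟨x, hx, -, rfl⟩
  have hsq := norm_sq_sum x hx
  have hxi : ∀ i, |(x : m → ℝ) i| ≤ 1 := by
    intro i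
    have h1 : (x : m → ℝ) i ^ 2 ≤ 1 := by
      rw [← hsq]
      exact Finset.single_le_sum (f := fun j => (x : m → ℝ) j ^ 2) (fun j _ => sq_nonneg _) (Finset.mem_univ i)
    nlinarith [abs_nonneg ((x : m → ℝ) i), sq_abs ((x : m → ℝ) i)]
  have hform : (x : m → ℝ) ⬝ᵥ L.mulVec (x : m → ℝ)
      = ∑ i, ∑ j, (x : m → ℝ) i * L i j * (x : m → ℝ) j := by
    simp only [dotProduct, Matrix.mulVec, Finset.mul_sum]
    exact Finset.sum_congr rfl fun i _ => Finset.sum_congr rfl fun j _ => by ring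
  rw [hform, ← Finset.sum_neg_distrib]
  refine Finset.sum_le_sum fun i _ => ?_
  rw [← Finset.sum_neg_distrib]
  refine Finset.sum_le_sum fun j _ => ?_
  have habs : |(x : m → ℝ) i * L i j * (x : m → ℝ) j| ≤ |L i j| := by
    rw [abs_mul, abs_mul]
    calc |(x : m → ℝ) i| * |L i j| * |(x : m → ℝ) j|
        ≤ 1 * |L i j| * 1 := by
          apply mul_le_mul (mul_le_mul (hxi i) le_rfl (abs_nonneg _) (by norm_num))
            (hxi j) (abs_nonneg _) (by positivity)
    _ = |L i j| := by ring
  nlinarith [neg_abs_le ((x : m → ℝ) i * L i j * (x : m → ℝ) j)]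

lemma algConn_smul_le {m : Type*} [Fintype m] (L : Matrix m m ℝ) (w : m → ℝ)
    (hw : w ⬝ᵥ (fun _ => (1 : ℝ)) = 0) :
    algConn L * (∑ i, w i ^ 2) ≤ w ⬝ᵥ L.mulVec w := by
  classical
  by_cases hw0 : w = 0
  · subst hw0; simp [dotProduct]
  · set S : ℝ := ∑ i, w i ^ 2 with hS
    have hSpos : 0 < S := by
      obtain ⟨i, hi⟩ := Function.ne_iff.mp hw0
      exact Finset.sum_pos' (fun j _ => sq_nonneg _)
        ⟨i, Finset.mem_univ i, lt_of_le_of_ne (sq_nonneg _) (Ne.symm (pow_ne_zero 2 hi))⟩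
    set s : ℝ := Real.sqrt S with hs
    have hspos : 0 < s := Real.sqrt_pos.mpr hSpos
    have hss : s * s = S := Real.mul_self_sqrt hSpos.le
    set x : EuclideanSpace ℝ m := (EuclideanSpace.equiv m ℝ).symm (s⁻¹ • w) with hx
    have hxfun : (x : m → ℝ) = s⁻¹ • w := rfl
    have hxnorm : ‖x‖ = 1 := by
      rw [EuclideanSpace.norm_eq]
      have : ∑ i, ‖(x : m → ℝ) i‖ ^ 2 = s⁻¹ ^ 2 * S := by
        rw [hxfun, Finset.mul_sum]
        refine Finset.sum_congr rfl fun i _ => ?_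
        simp [Real.norm_eq_abs, sq_abs, mul_pow]
      rw [this, sq, ← mul_inv, hss, inv_mul_cancel₀ hSpos.ne', Real.sqrt_one]
    have hxone : (x : m → ℝ) ⬝ᵥ (fun _ => (1 : ℝ)) = 0 := by
      rw [hxfun, smul_dotProduct, hw, smul_zero]
    have hxLx : (x : m → ℝ) ⬝ᵥ L.mulVec (x : m → ℝ) = s⁻¹ * (s⁻¹ * (w ⬝ᵥ L.mulVec w)) := by
      rw [hxfun, smul_dotProduct, Matrix.mulVec_smul, dotProduct_smul,
        smul_eq_mul, smul_eq_mul]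
    have hmem : s⁻¹ * (s⁻¹ * (w ⬝ᵥ L.mulVec w)) ∈ algSet L := ⟨x, hxnorm, hxone, hxLx.symm⟩
    have hle : algConn L ≤ s⁻¹ * (s⁻¹ * (w ⬝ᵥ L.mulVec w)) := csInf_le (bddBelow_algSet L) hmem
    calc algConn L * S ≤ (s⁻¹ * (s⁻¹ * (w ⬝ᵥ L.mulVec w))) * S :=
          mul_le_mul_of_nonneg_right hle hSpos.le
      _ = (w ⬝ᵥ L.mulVec w) * (S / (s * s)) := by ring
      _ = w ⬝ᵥ L.mulVec w := by rw [hss, div_self hSpos.ne', mul_one]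

lemma re_dotProduct {m : Type*} [Fintype m] [DecidableEq m] (A : Matrix m m ℝ) (x : m → ℂ) :
    (star x ⬝ᵥ (lapC A).mulVec x).re
      = (fun i => (x i).re) ⬝ᵥ (lap A).mulVec (fun i => (x i).re)
        + (fun i => (x i).im) ⬝ᵥ (lap A).mulVec (fun i => (x i).im) := by
  simp only [dotProduct, Matrix.mulVec, Pi.star_apply, lapC, Matrix.map_apply]
  rw [Complex.re_sum, ← Finset.sum_add_distrib]
  refine Finset.sum_congr rfl fun i _ => ?_
  rw [Finset.mul_sum, Complex.re_sum, Finset.mul_sum, Finset.mul_sum,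
    ← Finset.sum_add_distrib]
  refine Finset.sum_congr rfl fun j _ => ?_
  simp only [RCLike.star_def, Complex.mul_re, Complex.mul_im, Complex.conj_re, Complex.conj_im,
    Complex.ofReal_re, Complex.ofReal_im]
  ring

lemma sum_sq_re_im {m : Type*} [Fintype m] (x : m → ℂ) (h : ∑ i, ‖x i‖ ^ 2 = 1) :
    ∑ i, ((x i).re ^ 2 + (x i).im ^ 2) = 1 := by
  rw [← h]
  refine Finset.sum_congr rfl fun i _ => ?_
  rw [Complex.sq_norm, Complex.normSq_apply]
  ring

lemma norm_sq_sum_c {m : Type*} [Fintype m] (x : EuclideanSpace ℂ m) (h : ‖x‖ = 1) :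
    ∑ i, ‖(x : m → ℂ) i‖ ^ 2 = 1 := by
  have h1 := EuclideanSpace.norm_eq x
  rw [h] at h1
  rw [← Real.sqrt_eq_one.mp h1.symm]

lemma rnr_ge {m : Type*} [Fintype m] [DecidableEq m] (A : Matrix m m ℝ) {z : ℂ}
    (hz : z ∈ rnr (lapC A)) : algConn (lap A) ≤ z.re := by
  obtain ⟨x, hx1, hxe, hzx⟩ := hz
  set u : m → ℝ := fun i => ((x : m → ℂ) i).re with hu
  set v : m → ℝ := fun i => ((x : m → ℂ) i).im with hv
  have hxe' : ∑ i, star ((x : m → ℂ) i) = 0 := by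
    have := hxe
    simpa [dotProduct] using this
  have hue : u ⬝ᵥ (fun _ => (1 : ℝ)) = 0 := by
    have := congrArg Complex.re hxe'
    rw [Complex.re_sum] at this
    simpa [dotProduct, hu] using this
  have hve : v ⬝ᵥ (fun _ => (1 : ℝ)) = 0 := by
    have := congrArg Complex.im hxe'
    rw [Complex.im_sum] at this
    simp only [Pi.star_apply, RCLike.star_def, Complex.conj_im, Complex.zero_im,
      Finset.sum_neg_distrib] at this
    have h2 : ∑ i, ((x : m → ℂ) i).im = 0 := by linarith [neg_eq_zero.mp this]
    simpa [dotProduct, hv] using h2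
  have hsum : ∑ i, (u i ^ 2 + v i ^ 2) = 1 := sum_sq_re_im _ (norm_sq_sum_c x hx1)
  have hre : z.re = u ⬝ᵥ (lap A).mulVec u + v ⬝ᵥ (lap A).mulVec v := by
    rw [hzx]; exact re_dotProduct A _
  have h1 := algConn_smul_le (lap A) u hue
  have h2 := algConn_smul_le (lap A) v hve
  have hsplit : ∑ i, u i ^ 2 + ∑ i, v i ^ 2 = 1 := by
    rw [← Finset.sum_add_distrib]; exact hsum
  have h3 : algConn (lap A) * (∑ i, u i ^ 2) + algConn (lap A) * (∑ i, v i ^ 2)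
      = algConn (lap A) := by rw [← mul_add, hsplit, mul_one]
  linarith [h1, h2]

lemma star_dot_self_re {m : Type*} [Fintype m] (y : m → ℂ) :
    (star y ⬝ᵥ y).re = ∑ i, ‖y i‖ ^ 2 := by
  rw [dotProduct, Complex.re_sum]
  refine Finset.sum_congr rfl fun i _ => ?_
  simp only [Pi.star_apply, RCLike.star_def, Complex.mul_re, Complex.conj_re, Complex.conj_im]
  rw [Complex.sq_norm, Complex.normSq_apply]
  ring


lemma spec_sub_rnr {n : ℕ} (A : Matrix (Fin n) (Fin n) ℝ)
    (Q : Matrix (Fin n) (Fin (n-1)) ℂ) (hQ : IsRestrictor Q) :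
    spectrum ℂ (Qᴴ * lapC A * Q) ⊆ rnr (lapC A) := by
  intro lam hlam
  have hdet : (Matrix.diagonal (fun _ => lam) - (Qᴴ * lapC A * Q)).det = 0 := by
    rw [← charpoly_eval, ← mem_spectrum_iff']; exact hlam
  obtain ⟨v, hv0, hv⟩ := Matrix.exists_mulVec_eq_zero_iff.mpr hdet
  have hMv : (Qᴴ * lapC A * Q) *ᵥ v = lam • v := by
    rw [Matrix.sub_mulVec, sub_eq_zero] at hv
    rw [← hv]; ext i; simp [Matrix.mulVec_diagonal]
  set S : ℝ := ∑ i, ‖v i‖ ^ 2 with hS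
  have hSpos : 0 < S := by
    obtain ⟨i, hi⟩ := Function.ne_iff.mp hv0
    exact Finset.sum_pos' (fun j _ => by positivity)
      ⟨i, Finset.mem_univ i, by have := norm_pos_iff.mpr hi; positivity⟩
  set s : ℝ := Real.sqrt S with hs
  have hspos : 0 < s := Real.sqrt_pos.mpr hSpos
  have hss : s * s = S := Real.mul_self_sqrt hSpos.le
  set w : Fin (n-1) → ℂ := ((s : ℂ))⁻¹ • v with hw
  have hMw : (Qᴴ * lapC A * Q) *ᵥ w = lam • w := by
    rw [hw, Matrix.mulVec_smul, hMv, smul_comm]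
  have hstar : ∀ z : ℂ, star z * z = ((‖z‖ ^ 2 : ℝ) : ℂ) := by
    intro z
    rw [RCLike.star_def, mul_comm, Complex.mul_conj]
    rw [Complex.sq_norm]
  have hvv : star v ⬝ᵥ v = (S : ℂ) := by
    rw [dotProduct, hS]
    push_cast
    exact Finset.sum_congr rfl fun i _ => by rw [Pi.star_apply, hstar]; push_cast; ring
  have hww : star w ⬝ᵥ w = 1 := by
    rw [hw, star_smul, smul_dotProduct, dotProduct_smul, hvv]
    rw [smul_eq_mul, smul_eq_mul]
    have : (starRingEnd ℂ) ((s : ℂ))⁻¹ = ((s : ℂ))⁻¹ := by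
      rw [map_inv₀, Complex.conj_ofReal]
    rw [RCLike.star_def, this]
    rw [show ((s:ℂ))⁻¹ * (((s:ℂ))⁻¹ * (S:ℂ)) = (S:ℂ) / ((s:ℂ) * (s:ℂ)) by ring]
    rw [show ((s:ℂ) * (s:ℂ)) = (S:ℂ) by exact_mod_cast congrArg Complex.ofReal hss]
    exact div_self (by exact_mod_cast hSpos.ne')
  set x : EuclideanSpace ℂ (Fin n) := (EuclideanSpace.equiv (Fin n) ℂ).symm (Q *ᵥ w) with hx
  have hxfun : (x : Fin n → ℂ) = Q *ᵥ w := rfl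
  have hxx : star (Q *ᵥ w) ⬝ᵥ (Q *ᵥ w) = 1 := by
    rw [Matrix.star_mulVec, Matrix.dotProduct_mulVec, Matrix.vecMul_vecMul, hQ.1,
      Matrix.vecMul_one, hww]
  have hnorm : ‖x‖ = 1 := by
    rw [EuclideanSpace.norm_eq]
    have h2 : ∑ i, ‖(x : Fin n → ℂ) i‖ ^ 2 = 1 := by
      have h3 := star_dot_self_re (Q *ᵥ w)
      rw [hxx] at h3
      rw [hxfun, ← h3, Complex.one_re]
    rw [h2, Real.sqrt_one]
  have horth : star (x : Fin n → ℂ) ⬝ᵥ (fun _ => (1 : ℂ)) = 0 := by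
    rw [hxfun, Matrix.star_mulVec, ← Matrix.dotProduct_mulVec, hQ.2, dotProduct_zero]
  have hval : star (x : Fin n → ℂ) ⬝ᵥ (lapC A) *ᵥ (x : Fin n → ℂ) = lam := by
    rw [hxfun, Matrix.star_mulVec, Matrix.mulVec_mulVec, Matrix.dotProduct_mulVec,
      Matrix.vecMul_vecMul, ← Matrix.mul_assoc, ← Matrix.dotProduct_mulVec, hMw,
      dotProduct_smul, hww, smul_eq_mul, mul_one]
  exact ⟨x, hnorm, horth, hval.symm⟩

lemma algSet_nonempty {n : ℕ} (hn : 2 ≤ n) (L : Matrix (Fin n) (Fin n) ℝ) :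
    (algSet L).Nonempty := by
  classical
  set i0 : Fin n := ⟨0, by omega⟩ with hi0
  set i1 : Fin n := ⟨1, by omega⟩ with hi1
  have h01 : i0 ≠ i1 := by simp [hi0, hi1, Fin.ext_iff]
  set c : ℝ := (Real.sqrt 2)⁻¹ with hc
  have hc2 : c ^ 2 = 2⁻¹ := by
    rw [hc, inv_pow, sq, Real.mul_self_sqrt (by norm_num : (0:ℝ) ≤ 2)]
  set w : Fin n → ℝ := fun i => (if i = i0 then c else 0) + (if i = i1 then -c else 0) with hwdef
  have hsum0 : ∑ i, w i = 0 := by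
    rw [hwdef, Finset.sum_add_distrib, Finset.sum_ite_eq' Finset.univ i0 (fun _ => c),
      Finset.sum_ite_eq' Finset.univ i1 (fun _ => -c)]
    simp
  have hsq : ∀ i, w i ^ 2 = (if i = i0 then c ^ 2 else 0) + (if i = i1 then c ^ 2 else 0) := by
    intro i
    rw [hwdef]
    rcases eq_or_ne i i0 with h0 | h0
    · have h1 : i ≠ i1 := by rw [h0]; exact h01
      simp [h0, h1, h01]
    · rcases eq_or_ne i i1 with h1 | h1
      · simp [h0, h1, Ne.symm h01]
      · simp [h0, h1]
  have hsum2 : ∑ i, w i ^ 2 = 1 := by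
    rw [Finset.sum_congr rfl fun i _ => hsq i, Finset.sum_add_distrib,
      Finset.sum_ite_eq' Finset.univ i0 (fun _ => c ^ 2),
      Finset.sum_ite_eq' Finset.univ i1 (fun _ => c ^ 2)]
    simp [hc2]
    norm_num
  set x : EuclideanSpace ℝ (Fin n) := (EuclideanSpace.equiv (Fin n) ℝ).symm w with hx
  have hxfun : (x : Fin n → ℝ) = w := rfl
  have hnorm : ‖x‖ = 1 := by
    rw [EuclideanSpace.norm_eq]
    have : ∑ i, ‖(x : Fin n → ℝ) i‖ ^ 2 = 1 := by
      rw [hxfun]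
      rw [Finset.sum_congr rfl fun i _ => by rw [Real.norm_eq_abs, sq_abs]]
      exact hsum2
    rw [this, Real.sqrt_one]
  have hone : (x : Fin n → ℝ) ⬝ᵥ (fun _ => (1 : ℝ)) = 0 := by
    rw [hxfun, dotProduct]
    simpa using hsum0
  exact ⟨(x : Fin n → ℝ) ⬝ᵥ L.mulVec (x : Fin n → ℝ), x, hnorm, hone, rfl⟩

end DigraphAux

/-- If `Γ` is polygonal, then `α(Γ) = 0` iff `0` is an eigenvalue of `QᴴLQ`,
equivalently iff the multiplicity of `0` as a root of the characteristic polynomial of `L`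
is at least `2`. -/
theorem algConn_eq_zero_iff_of_polygonal {n : ℕ} (hn : 2 ≤ n)
    (A : Matrix (Fin n) (Fin n) ℝ) (hA : IsAdj A)
    (Q : Matrix (Fin n) (Fin (n - 1)) ℂ) (hQ : IsRestrictor Q)
    (hpoly : rnr (lapC A) = convexHull ℝ (spectrum ℂ (Qᴴ * lapC A * Q))) :
    (algConn (lap A) = 0 ↔ (0 : ℂ) ∈ spectrum ℂ (Qᴴ * lapC A * Q)) ∧
    (algConn (lap A) = 0 ↔ 2 ≤ (Matrix.charpoly (lapC A)).rootMultiplicity 0) := by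
  classical
  obtain ⟨hQ1, hQ2⟩ := hQ
  set M := Qᴴ * lapC A * Q with hM
  set p := M.charpoly with hp
  have hp0 : p ≠ 0 := (Matrix.charpoly_monic M).ne_zero
  have hfact : (lapC A).charpoly = X * p := DigraphAux.charpoly_factor hn A Q ⟨hQ1, hQ2⟩
  have hdegpos : 0 < p.natDegree := by
    rw [hp, Matrix.charpoly_natDegree_eq_dim, Fintype.card_fin]
    omega
  have hdeg : p.degree ≠ 0 := (Polynomial.natDegree_pos_iff_degree_pos.mp hdegpos).ne'
  obtain ⟨z0, hz0⟩ := Complex.exists_root (Polynomial.natDegree_pos_iff_degree_pos.mp hdegpos)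
  have hz0mem : z0 ∈ spectrum ℂ M := (DigraphAux.mem_spectrum_iff' M z0).mpr hz0
  have hfin : (spectrum ℂ M).Finite := by
    have hsubset : spectrum ℂ M ⊆ { z | p.IsRoot z } := fun z hz =>
      (DigraphAux.mem_spectrum_iff' M z).mp hz
    exact (Polynomial.finite_setOf_isRoot hp0).subset hsubset
  obtain ⟨lam0, hlam0mem, hlam0min⟩ :=
    Set.exists_min_image (spectrum ℂ M) Complex.re hfin ⟨z0, hz0mem⟩
  have hsubL : spectrum ℂ M ⊆ spectrum ℂ (lapC A) := by
    intro z hz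
    rw [DigraphAux.mem_spectrum_iff', hfact, Polynomial.eval_mul]
    rw [(DigraphAux.mem_spectrum_iff' M z).mp hz, mul_zero]
  have hgersh := DigraphAux.lapC_spectrum_re A hA (hsubL hlam0mem)
  have h1 : algConn (lap A) ≤ lam0.re :=
    DigraphAux.rnr_ge A (DigraphAux.spec_sub_rnr A Q ⟨hQ1, hQ2⟩ hlam0mem)
  have h2 : lam0.re ≤ algConn (lap A) := by
    rw [DigraphAux.algConn_eq]
    refine le_csInf (DigraphAux.algSet_nonempty hn _) ?_
    rintro r ⟨x, hx1, hxe, rfl⟩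
    set xc : EuclideanSpace ℂ (Fin n) :=
      (EuclideanSpace.equiv (Fin n) ℂ).symm (fun i => ((x : Fin n → ℝ) i : ℂ)) with hxc
    have hxcfun : (xc : Fin n → ℂ) = fun i => ((x : Fin n → ℝ) i : ℂ) := rfl
    have hnormc : ‖xc‖ = 1 := by
      rw [EuclideanSpace.norm_eq]
      have : ∑ i, ‖(xc : Fin n → ℂ) i‖ ^ 2 = 1 := by
        rw [hxcfun]
        have hre := DigraphAux.norm_sq_sum x hx1
        rw [← hre]
        exact Finset.sum_congr rfl fun i _ => by
          rw [Complex.norm_real, Real.norm_eq_abs, sq_abs]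
      rw [this, Real.sqrt_one]
    have horthc : star (xc : Fin n → ℂ) ⬝ᵥ (fun _ => (1 : ℂ)) = 0 := by
      rw [hxcfun]
      simp only [dotProduct, Pi.star_apply, RCLike.star_def, Complex.conj_ofReal, mul_one]
      rw [← Complex.ofReal_sum]
      have : ∑ i, (x : Fin n → ℝ) i = 0 := by simpa [dotProduct] using hxe
      rw [this, Complex.ofReal_zero]
    have hvalc : star (xc : Fin n → ℂ) ⬝ᵥ (lapC A) *ᵥ (xc : Fin n → ℂ)
        = (((x : Fin n → ℝ) ⬝ᵥ (lap A).mulVec (x : Fin n → ℝ) : ℝ) : ℂ) := by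
      rw [hxcfun]
      simp only [dotProduct, Matrix.mulVec, Pi.star_apply, RCLike.star_def,
        Complex.conj_ofReal, lapC, Matrix.map_apply]
      push_cast
      rfl
    have hmem : (((x : Fin n → ℝ) ⬝ᵥ (lap A).mulVec (x : Fin n → ℝ) : ℝ) : ℂ) ∈ rnr (lapC A) :=
      ⟨xc, hnormc, horthc, hvalc.symm⟩
    rw [hpoly] at hmem
    have hconv : convexHull ℝ (spectrum ℂ M) ⊆ { z : ℂ | lam0.re ≤ z.re } :=
      convexHull_min (fun z hz => hlam0min z hz) (convex_halfSpace_re_ge lam0.re)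
    have := hconv hmem
    simpa using this
  have halg : algConn (lap A) = lam0.re := le_antisymm h1 h2
  have iff1 : algConn (lap A) = 0 ↔ (0 : ℂ) ∈ spectrum ℂ M := by
    constructor
    · intro h
      have hlam0 : lam0 = 0 := hgersh.2 (by rw [← halg]; exact h)
      rwa [hlam0] at hlam0mem
    · intro h0
      have hle := hlam0min 0 h0
      simp only [Complex.zero_re] at hle
      rw [halg]
      linarith [hgersh.1]
  refine ⟨iff1, ?_⟩
  rw [iff1]
  have hXp0 : (X : ℂ[X]) * p ≠ 0 := by rw [← hfact]; exact (Matrix.charpoly_monic _).ne_zero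
  have hmul : ((lapC A).charpoly).rootMultiplicity 0
      = Polynomial.rootMultiplicity 0 (X : ℂ[X]) + p.rootMultiplicity 0 := by
    rw [hfact]; exact Polynomial.rootMultiplicity_mul hXp0
  have hX1 : Polynomial.rootMultiplicity 0 (X : ℂ[X]) = 1 := by
    have := Polynomial.rootMultiplicity_X_sub_C_self (R := ℂ) (x := 0)
    simpa using this
  rw [hmul, hX1]
  rw [DigraphAux.mem_spectrum_iff']
  constructor
  · intro hroot
    have : 0 < p.rootMultiplicity 0 := (Polynomial.rootMultiplicity_pos hp0).mpr hroot
    omega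
  · intro hge
    have : 0 < p.rootMultiplicity 0 := by omega
    exact (Polynomial.rootMultiplicity_pos hp0).mp this
end

section
/- Let Γ be a digraph of order n with Laplacian L, let L̄ = (n·I − e·eᵀ) − L be the Laplacian of the complement digraph Γ̄, and let Q be a restrictor matrix of order n. Then: (a) L is a normal matrix if and only if L̄ is a normal matrix; (b) QᴴLQ is a normal matrix if and only if QᴴL̄Q is a normal matrix; (c) W_r(L) equals the convex hull (over ℝ) of the spectrum of QᴴLQ if and only if W_r(L̄) equals the convex hull of the spectrum of QᴴL̄Q. Consequently, Γ is normal (resp. restricted-normal, resp. pseudo-normal) if and only if Γ̄ is normal (resp. restricted-normal, resp. pseudo-normal). -/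
open Matrix

namespace CCCaux

variable {m : Type*} [Fintype m] [DecidableEq m]

lemma comm_shift (N : Matrix m m ℂ) (c : ℝ) :
    star ((c:ℂ)•(1:Matrix m m ℂ) - N) * ((c:ℂ)•(1:Matrix m m ℂ) - N)
      - ((c:ℂ)•(1:Matrix m m ℂ) - N) * star ((c:ℂ)•(1:Matrix m m ℂ) - N)
      = star N * N - N * star N := by
  simp only [star_sub, star_smul, Complex.star_def, Complex.conj_ofReal, star_one,
    mul_sub, sub_mul, smul_mul_assoc, mul_smul_comm, one_mul, mul_one, smul_sub, smul_smul]
  abel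

lemma normal_shift (N : Matrix m m ℂ) (c : ℝ) :
    IsNormalM ((c:ℂ)•(1:Matrix m m ℂ) - N) ↔ IsNormalM N := by
  unfold IsNormalM
  rw [← sub_eq_zero, comm_shift, sub_eq_zero]

lemma comm_bar (M J : Matrix m m ℂ) (c : ℝ)
    (hJ : star J = J) (hMJ : M * J = 0) :
    star ((c:ℂ)•(1:Matrix m m ℂ) - J - M) * ((c:ℂ)•(1:Matrix m m ℂ) - J - M)
      - ((c:ℂ)•(1:Matrix m m ℂ) - J - M) * star ((c:ℂ)•(1:Matrix m m ℂ) - J - M)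
      = (star M * M - M * star M) + J * M + star M * J := by
  have h2 : J * star M = 0 := by
    have h3 : star (M * star J) = J * star M := by rw [Matrix.star_mul, star_star]
    rw [← h3, hJ, hMJ, star_zero]
  simp only [star_sub, star_smul, Complex.star_def, Complex.conj_ofReal, star_one, hJ,
    mul_sub, sub_mul, smul_mul_assoc, mul_smul_comm, one_mul, mul_one, hMJ, h2,
    sub_zero, smul_zero, smul_sub, smul_smul]
  abel

lemma lap_rowsum (A : Matrix m m ℝ) (i : m) : ∑ k, lap A i k = 0 := by
  simp [lap, Finset.sum_sub_distrib, Matrix.diagonal_apply, Finset.sum_ite_eq]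

lemma lap_colsum (A : Matrix m m ℝ) (j : m) :
    ∑ k, lap A k j = (∑ l, A j l) - ∑ k, A k j := by
  simp [lap, Finset.sum_sub_distrib, Matrix.diagonal_apply, Finset.sum_ite_eq']

lemma lap_colsq (A : Matrix m m ℝ) (hA : IsAdj A) (j : m) :
    ∑ k, lap A k j * lap A k j = (∑ l, A j l)^2 + ∑ k, A k j := by
  have he : ∑ k, A k j = ∑ k ∈ Finset.univ.erase j, A k j := by
    rw [← Finset.add_sum_erase Finset.univ (fun k => A k j) (Finset.mem_univ j), hA.2 j, zero_add]
  rw [he, ← Finset.add_sum_erase Finset.univ (fun k => lap A k j * lap A k j) (Finset.mem_univ j)]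
  have h1 : lap A j j = ∑ l, A j l := by simp [lap, hA.2 j]
  have h2 : ∀ k ∈ Finset.univ.erase j, lap A k j * lap A k j = A k j := by
    intro k hk
    have hkj : k ≠ j := Finset.ne_of_mem_erase hk
    have : lap A k j = -A k j := by simp [lap, Matrix.diagonal_apply_ne _ hkj]
    rw [this]
    rcases hA.1 k j with h | h <;> rw [h] <;> ring
  rw [Finset.sum_congr rfl h2, h1]
  ring

lemma lap_rowsq (A : Matrix m m ℝ) (hA : IsAdj A) (i : m) :
    ∑ k, lap A i k * lap A i k = (∑ l, A i l)^2 + ∑ l, A i l := by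
  have he : ∑ l, A i l = ∑ l ∈ Finset.univ.erase i, A i l := by
    rw [← Finset.add_sum_erase Finset.univ (fun l => A i l) (Finset.mem_univ i), hA.2 i, zero_add]
  conv_lhs => rw [← Finset.add_sum_erase Finset.univ (fun k => lap A i k * lap A i k)
    (Finset.mem_univ i)]
  rw [he]
  have h1 : lap A i i = ∑ l, A i l := by simp [lap, hA.2 i]
  have h2 : ∀ k ∈ Finset.univ.erase i, lap A i k * lap A i k = A i k := by
    intro k hk
    have hki : k ≠ i := Finset.ne_of_mem_erase hk
    have : lap A i k = -A i k := by simp [lap, Matrix.diagonal_apply_ne _ (Ne.symm hki)]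
    rw [this]
    rcases hA.1 i k with h | h <;> rw [h] <;> ring
  rw [Finset.sum_congr rfl h2, h1, he]
  ring

lemma entry_sMM (A : Matrix m m ℝ) (j : m) :
    (star (lapC A) * lapC A) j j = ((∑ k, lap A k j * lap A k j : ℝ) : ℂ) := by
  simp only [Matrix.mul_apply, Matrix.star_apply, lapC, Matrix.map_apply,
    Complex.star_def, Complex.conj_ofReal]
  push_cast
  rfl

lemma entry_MsM (A : Matrix m m ℝ) (i : m) :
    (lapC A * star (lapC A)) i i = ((∑ k, lap A i k * lap A i k : ℝ) : ℂ) := by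
  simp only [Matrix.mul_apply, Matrix.star_apply, lapC, Matrix.map_apply,
    Complex.star_def, Complex.conj_ofReal]
  push_cast
  rfl

lemma entry_JM (A : Matrix m m ℝ) (i j : m) :
    (((Matrix.of fun _ _ => (1:ℂ)) : Matrix m m ℂ) * lapC A) i j
      = ((∑ k, lap A k j : ℝ) : ℂ) := by
  simp only [Matrix.mul_apply, Matrix.of_apply, one_mul, lapC, Matrix.map_apply]
  push_cast
  rfl

lemma entry_sMJ (A : Matrix m m ℝ) (i j : m) :
    (star (lapC A) * ((Matrix.of fun _ _ => (1:ℂ)) : Matrix m m ℂ)) i j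
      = ((∑ k, lap A k i : ℝ) : ℂ) := by
  simp only [Matrix.mul_apply, Matrix.star_apply, Matrix.of_apply, mul_one, lapC,
    Matrix.map_apply, Complex.star_def, Complex.conj_ofReal]
  push_cast
  rfl

lemma MJ_zero (A : Matrix m m ℝ) :
    lapC A * (Matrix.of fun _ _ => (1:ℂ)) = 0 := by
  ext i j
  simp only [Matrix.mul_apply, Matrix.of_apply, mul_one, lapC, Matrix.map_apply,
    Matrix.zero_apply]
  rw [← Complex.ofReal_sum, lap_rowsum, Complex.ofReal_zero]

lemma starJ : star (Matrix.of fun _ _ => (1:ℂ)) = (Matrix.of fun (_ _ : m) => (1:ℂ)) := by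
  ext i j
  simp [Matrix.star_apply]

lemma quadform (L : Matrix m m ℂ) (c : ℝ) (x : EuclideanSpace ℂ m) (hx : ‖x‖ = 1)
    (he : star (x : m → ℂ) ⬝ᵥ (fun _ => (1:ℂ)) = 0) :
    star (x : m → ℂ) ⬝ᵥ (((c:ℂ)•(1:Matrix m m ℂ) - (Matrix.of fun _ _ => (1:ℂ)) - L)).mulVec x
      = (c:ℂ) - star (x : m → ℂ) ⬝ᵥ L.mulVec x := by
  have hxx : star (x : m → ℂ) ⬝ᵥ (x : m → ℂ) = 1 := by
    have h1 : star (x : m → ℂ) ⬝ᵥ (x : m → ℂ) = (inner ℂ x x : ℂ) := by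
      simp only [dotProduct, PiLp.inner_apply, RCLike.inner_apply, Pi.star_apply, Complex.star_def, mul_comm]
    rw [h1, inner_self_eq_norm_sq_to_K, hx]
    norm_num
  have hJ : star (x : m → ℂ) ⬝ᵥ (Matrix.of fun _ _ => (1:ℂ)).mulVec x = 0 := by
    simp only [dotProduct, Matrix.mulVec, Matrix.of_apply, one_mul, Pi.star_apply]
    rw [← Finset.sum_mul]
    simp_all [dotProduct]
  rw [Matrix.sub_mulVec, Matrix.sub_mulVec, Matrix.smul_mulVec, Matrix.one_mulVec,
    dotProduct_sub, dotProduct_sub, dotProduct_smul, hxx, hJ]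
  simp

lemma spec_shift (N : Matrix m m ℂ) (c : ℝ) :
    spectrum ℂ ((c:ℂ)•(1:Matrix m m ℂ) - N) = (fun z => (c:ℂ) - z) '' spectrum ℂ N := by
  have : (c:ℂ)•(1:Matrix m m ℂ) = algebraMap ℂ (Matrix m m ℂ) (c:ℂ) :=
    (Algebra.algebraMap_eq_smul_one _).symm
  rw [this, ← spectrum.singleton_sub_eq, Set.singleton_sub]

lemma hull_affine (s : Set ℂ) (c : ℝ) :
    (fun z => (c:ℂ) - z) '' (convexHull ℝ s) = convexHull ℝ ((fun z => (c:ℂ) - z) '' s) := by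
  have hf : (fun z => (c:ℂ) - z) = ⇑(AffineMap.const ℝ ℂ (c:ℂ) + (-(AffineMap.id ℝ ℂ))) := by
    funext z
    simp [sub_eq_add_neg]
  rw [hf, AffineMap.image_convexHull]

end CCCaux

/-- With `L̄ = (n·I - e·eᵀ) - L` the Laplacian of the complement digraph:
(a) `L` is normal iff `L̄` is normal; (b) `QᴴLQ` is normal iff `QᴴL̄Q` is normal;
(c) `W_r(L)` is the convex hull of the spectrum of `QᴴLQ` iff the same holds for `L̄`.
Consequently `Γ` is normal (resp. restricted-normal, resp. pseudo-normal) iff `Γ̄` is. -/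
theorem classes_closed_under_complement {n : ℕ}
    (A : Matrix (Fin n) (Fin n) ℝ) (hA : IsAdj A)
    (Q : Matrix (Fin n) (Fin (n - 1)) ℂ) (hQ : IsRestrictor Q)
    (L Lbar : Matrix (Fin n) (Fin n) ℂ) (hL : L = lapC A)
    (hLbar : Lbar = (n : ℂ) • (1 : Matrix (Fin n) (Fin n) ℂ)
        - (Matrix.of fun _ _ => (1 : ℂ)) - L) :
    (IsNormalM L ↔ IsNormalM Lbar) ∧
    (IsNormalM (Qᴴ * L * Q) ↔ IsNormalM (Qᴴ * Lbar * Q)) ∧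
    (rnr L = convexHull ℝ (spectrum ℂ (Qᴴ * L * Q)) ↔
      rnr Lbar = convexHull ℝ (spectrum ℂ (Qᴴ * Lbar * Q))) ∧
    ((¬ IsNormalM L ∧ IsNormalM (Qᴴ * L * Q)) ↔
      (¬ IsNormalM Lbar ∧ IsNormalM (Qᴴ * Lbar * Q))) ∧
    ((¬ IsNormalM L ∧ ¬ IsNormalM (Qᴴ * L * Q) ∧
        rnr L = convexHull ℝ (spectrum ℂ (Qᴴ * L * Q))) ↔
      (¬ IsNormalM Lbar ∧ ¬ IsNormalM (Qᴴ * Lbar * Q) ∧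
        rnr Lbar = convexHull ℝ (spectrum ℂ (Qᴴ * Lbar * Q)))) := by
  open CCCaux in
  have hnc : (n : ℂ) = ((n : ℝ) : ℂ) := by push_cast; ring
  set J : Matrix (Fin n) (Fin n) ℂ := Matrix.of fun _ _ => (1:ℂ) with hJdef
  have hLbar' : Lbar = ((n:ℝ):ℂ) • (1 : Matrix (Fin n) (Fin n) ℂ) - J - L := by
    rw [hLbar, hnc]
  -- balancedness consequences
  have hbal_JM : Bal A → J * L = 0 := by
    intro hb
    ext i j
    rw [hL, CCCaux.entry_JM A i j, CCCaux.lap_colsum A j, Matrix.zero_apply]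
    rw [hb j]
    simp
  have hbal_sMJ : Bal A → star L * J = 0 := by
    intro hb
    ext i j
    rw [hL, CCCaux.entry_sMJ A i j, CCCaux.lap_colsum A i, Matrix.zero_apply]
    rw [hb i]
    simp
  have hMJ : L * J = 0 := by rw [hL]; exact CCCaux.MJ_zero A
  have hcomm_bar : star Lbar * Lbar - Lbar * star Lbar =
      (star L * L - L * star L) + J * L + star L * J := by
    rw [hLbar']
    exact CCCaux.comm_bar L J (n : ℝ) CCCaux.starJ hMJ
  -- part (a)
  have ha : IsNormalM L ↔ IsNormalM Lbar := by
    constructor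
    · intro h
      have hbal : Bal A := by
        intro i
        have hd := congrFun (congrFun h i) i
        rw [hL] at hd
        rw [CCCaux.entry_sMM A i, CCCaux.entry_MsM A i, CCCaux.lap_colsq A hA i,
          CCCaux.lap_rowsq A hA i] at hd
        have := Complex.ofReal_inj.mp hd
        linarith
      unfold IsNormalM
      rw [← sub_eq_zero, hcomm_bar, hbal_JM hbal, hbal_sMJ hbal, sub_eq_zero.mpr h]
      simp
    · intro h
      have h0 : (star L * L - L * star L) + J * L + star L * J = 0 := by
        rw [← hcomm_bar, sub_eq_zero]
        exact h
      have hbal : Bal A := by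
        intro i
        have hd := congrFun (congrFun h0 i) i
        simp only [Matrix.add_apply, Matrix.sub_apply, Matrix.zero_apply] at hd
        rw [hL] at hd
        rw [CCCaux.entry_sMM A i, CCCaux.entry_MsM A i, CCCaux.lap_colsq A hA i,
          CCCaux.lap_rowsq A hA i, CCCaux.entry_JM A i i, CCCaux.entry_sMJ A i i,
          CCCaux.lap_colsum A i] at hd
        have hd' : (((∑ l, A i l)^2 + ∑ k, A k i) - ((∑ l, A i l)^2 + ∑ l, A i l)
            + ((∑ l, A i l) - ∑ k, A k i) + ((∑ l, A i l) - ∑ k, A k i) : ℝ) = 0 := by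
          exact_mod_cast hd
        linarith
      unfold IsNormalM
      rw [← sub_eq_zero]
      rw [hbal_JM hbal, hbal_sMJ hbal] at h0
      simpa using h0
  -- part (b)
  have hQJ : Qᴴ * J = 0 := by
    ext i j
    have := congrFun hQ.2 i
    simpa [Matrix.mul_apply, Matrix.mulVec, dotProduct, hJdef] using this
  have hQbar : Qᴴ * Lbar * Q = ((n:ℝ):ℂ) • (1 : Matrix (Fin (n-1)) (Fin (n-1)) ℂ)
      - Qᴴ * L * Q := by
    rw [hLbar']
    rw [Matrix.mul_sub, Matrix.mul_sub, Matrix.sub_mul, Matrix.sub_mul, hQJ]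
    rw [Matrix.mul_smul, Matrix.mul_one, Matrix.smul_mul, hQ.1]
    simp [Matrix.mul_assoc]
  have hb : IsNormalM (Qᴴ * L * Q) ↔ IsNormalM (Qᴴ * Lbar * Q) := by
    rw [hQbar]
    exact (CCCaux.normal_shift (Qᴴ * L * Q) (n : ℝ)).symm
  -- part (c)
  have hrnr : rnr Lbar = (fun z => ((n:ℝ):ℂ) - z) '' rnr L := by
    ext z
    simp only [rnr, Set.mem_setOf_eq, Set.mem_image]
    constructor
    · rintro ⟨x, h1, h2, h3⟩
      refine ⟨star (x : Fin n → ℂ) ⬝ᵥ L.mulVec x, ⟨x, h1, h2, rfl⟩, ?_⟩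
      rw [h3, hLbar', CCCaux.quadform L (n:ℝ) x h1 h2]
    · rintro ⟨w, ⟨x, h1, h2, h3⟩, h4⟩
      refine ⟨x, h1, h2, ?_⟩
      rw [hLbar', CCCaux.quadform L (n:ℝ) x h1 h2, ← h3, h4]
  have hspec : convexHull ℝ (spectrum ℂ (Qᴴ * Lbar * Q)) =
      (fun z => ((n:ℝ):ℂ) - z) '' convexHull ℝ (spectrum ℂ (Qᴴ * L * Q)) := by
    rw [hQbar, CCCaux.spec_shift, CCCaux.hull_affine]
  have hc : rnr L = convexHull ℝ (spectrum ℂ (Qᴴ * L * Q)) ↔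
      rnr Lbar = convexHull ℝ (spectrum ℂ (Qᴴ * Lbar * Q)) := by
    constructor
    · intro h
      rw [hrnr, h, hspec]
    · intro h
      rw [hrnr, hspec] at h
      have hinj : Function.Injective (fun z => ((n:ℝ):ℂ) - z) := fun a b hab => by
        simpa using sub_right_injective hab
      exact Set.image_injective.mpr hinj h
  exact ⟨ha, hb, hc, and_congr (not_congr ha) hb,
    and_congr (not_congr ha) (and_congr (not_congr hb) hc)⟩
end

section
/- Let Γ₁ and Γ₂ be balanced digraphs of orders n₁ ≥ 1 and n₂ ≥ 1 with Laplacians L₁ and L₂, and let L be the block-diagonal matrix fromBlocks L₁ 0 0 L₂, which is the Laplacian of the disjoint union Γ₁ ⊔ Γ₂ of order n = n₁ + n₂. Then W_r(L) = convexHull ℝ ( W_r(L₁) ∪ W_r(L₂) ∪ {0} ), where ℂ is regarded as a real vector space. -/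
open Matrix

variable {ι : Type*} [Fintype ι]

lemma sdp_self (x : EuclideanSpace ℂ ι) : star (x : ι → ℂ) ⬝ᵥ (x : ι → ℂ) = (‖x‖ : ℂ)^2 := by
  have h := inner_self_eq_norm_sq_to_K (𝕜 := ℂ) x
  rw [dotProduct_comm, ← EuclideanSpace.inner_eq_star_dotProduct]
  exact h

lemma norm_eq_one_iff (x : EuclideanSpace ℂ ι) :
    ‖x‖ = 1 ↔ star (x : ι → ℂ) ⬝ᵥ (x : ι → ℂ) = 1 := by
  rw [sdp_self]
  constructor
  · intro h; rw [h]; norm_num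
  · intro h
    have : ((‖x‖^2 : ℝ) : ℂ) = ((1:ℝ) : ℂ) := by push_cast; simpa using h
    have h2 : ‖x‖^2 = 1 := by exact_mod_cast this
    nlinarith [norm_nonneg x]

lemma mem_rnr_of {ι : Type*} [Fintype ι] (M : Matrix ι ι ℂ) (f : ι → ℂ)
    (h1 : star f ⬝ᵥ f = 1) (h2 : star f ⬝ᵥ (fun _ => (1:ℂ)) = 0) :
    star f ⬝ᵥ M *ᵥ f ∈ rnr M := by
  refine ⟨(WithLp.equiv 2 (ι → ℂ)).symm f, ?_, h2, rfl⟩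
  rw [norm_eq_one_iff]
  exact h1

theorem rnr_convex (M : Matrix ι ι ℂ) : Convex ℝ (rnr M) := by
  rintro z₁ ⟨x, hx, hxe, rfl⟩ z₂ ⟨y, hy, hye, rfl⟩ a t ha ht hab
  set X : ι → ℂ := (x : ι → ℂ) with hX
  set Y : ι → ℂ := (y : ι → ℂ) with hY
  set qx : ℂ := star X ⬝ᵥ M *ᵥ X with hqx
  set qy : ℂ := star Y ⬝ᵥ M *ᵥ Y with hqy
  have hNx : star X ⬝ᵥ X = 1 := (norm_eq_one_iff x).1 hx
  have hNy : star Y ⬝ᵥ Y = 1 := (norm_eq_one_iff y).1 hy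
  -- trivial cases
  rcases eq_or_lt_of_le ht with ht0 | htpos
  · have haa : a = 1 := by linarith
    subst haa; rw [← ht0]
    exact ⟨x, hx, hxe, by simp; rfl⟩
  rcases eq_or_lt_of_le ha with ha0 | hapos
  · have htt : t = 1 := by linarith
    subst htt; rw [← ha0]
    exact ⟨y, hy, hye, by simp; rfl⟩
  have ha1 : a = 1 - t := by linarith
  subst ha1
  by_cases hd : qy - qx = 0
  · have hqq : qy = qx := by linear_combination hd
    have : (1-t) • qx + t • qy = qx := by
      rw [hqq, ← add_smul]; norm_num
    rw [this]
    exact ⟨x, hx, hxe, rfl⟩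
  obtain ⟨d, hdd⟩ : ∃ z : ℂ, z = qy - qx := ⟨_, rfl⟩
  have hdne : d ≠ 0 := by rw [hdd]; exact hd
  -- sesquilinear data
  obtain ⟨p, hp⟩ : ∃ z : ℂ, z = star X ⬝ᵥ Y := ⟨_, rfl⟩
  obtain ⟨u, hu⟩ : ∃ z : ℂ, z = star X ⬝ᵥ M *ᵥ Y := ⟨_, rfl⟩
  obtain ⟨v, hv⟩ : ∃ z : ℂ, z = star Y ⬝ᵥ M *ᵥ X := ⟨_, rfl⟩
  obtain ⟨Ac, hAc⟩ : ∃ z : ℂ, z = (u - qx * p) / d := ⟨_, rfl⟩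
  obtain ⟨Bc, hBc⟩ : ∃ z : ℂ, z = (v - qx * (starRingEnd ℂ) p) / d := ⟨_, rfl⟩
  obtain ⟨c, hc⟩ : ∃ z : ℂ, z = Ac - (starRingEnd ℂ) Bc := ⟨_, rfl⟩
  obtain ⟨ε, hε⟩ : ∃ z : ℂ, z = if c = 0 then 1 else (starRingEnd ℂ) c / (‖c‖ : ℂ) := ⟨_, rfl⟩
  have hεc : ε * c = ((‖c‖ : ℝ) : ℂ) := by
    by_cases h0 : c = 0
    · simp [hε, h0]
    · have habs : (‖c‖ : ℂ) ≠ 0 := by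
        simpa using (norm_ne_zero_iff.mpr h0)
      rw [hε, if_neg h0, div_mul_eq_mul_div, mul_comm ((starRingEnd ℂ) c) c,
        Complex.mul_conj, ← Complex.sq_norm]
      push_cast
      field_simp
  have hεε : (starRingEnd ℂ) ε * ε = 1 := by
    by_cases h0 : c = 0
    · simp [hε, h0]
    · have habs : (‖c‖ : ℂ) ≠ 0 := by
        simpa using (norm_ne_zero_iff.mpr h0)
      rw [hε, if_neg h0]
      rw [map_div₀, Complex.conj_conj, Complex.conj_ofReal, div_mul_div_comm,
        Complex.mul_conj, ← Complex.sq_norm]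
      push_cast
      field_simp
  -- κ is real
  obtain ⟨κ, hκ⟩ : ∃ z : ℂ, z = ε * Ac + (starRingEnd ℂ) ε * Bc := ⟨_, rfl⟩
  have hκreal : (starRingEnd ℂ) κ = κ := by
    have h2 : (starRingEnd ℂ) (ε * c) = ε * c := by rw [hεc, Complex.conj_ofReal]
    have h3 : κ - (starRingEnd ℂ) κ = (ε * c) - (starRingEnd ℂ) (ε * c) := by
      simp only [hκ, hc, map_add, _root_.map_mul, map_sub, Complex.conj_conj]
      ring
    have h4 : κ - (starRingEnd ℂ) κ = 0 := by rw [h3, h2, sub_self]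
    linear_combination -h4
  obtain ⟨K, hK⟩ : ∃ z : ℝ, z = κ.re := ⟨_, rfl⟩
  have hκK : ((K : ℝ) : ℂ) = κ := by rw [hK]; exact Complex.conj_eq_iff_re.mp hκreal
  -- the rotated second vector
  obtain ⟨W, hW⟩ : ∃ z : ι → ℂ, z = ε • Y := ⟨_, rfl⟩
  have hsW : star W = (starRingEnd ℂ) ε • star Y := by
    funext i
    simp [hW, Pi.star_apply, Complex.star_def, _root_.map_mul]
  have hNW : star W ⬝ᵥ W = 1 := by
    rw [hsW, hW, smul_dotProduct, dotProduct_smul, hNy]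
    simp [smul_eq_mul, hεε]
  have hqW : star W ⬝ᵥ M *ᵥ W = qy := by
    rw [hsW, hW, mulVec_smul, smul_dotProduct, dotProduct_smul]
    simp only [smul_eq_mul, ← hqy, ← mul_assoc, hεε, one_mul]
  have hpw : star X ⬝ᵥ W = ε * p := by
    rw [hW, dotProduct_smul]; simp [smul_eq_mul, hp]
  have hwx : star W ⬝ᵥ X = (starRingEnd ℂ) (ε * p) := by
    rw [← hpw, star_dotProduct]; rfl
  have hsxW : star X ⬝ᵥ M *ᵥ W = ε * u := by
    rw [hW, mulVec_smul, dotProduct_smul]; simp [smul_eq_mul, hu]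
  have hsWx : star W ⬝ᵥ M *ᵥ X = (starRingEnd ℂ) ε * v := by
    rw [hsW, smul_dotProduct]; simp [smul_eq_mul, hv]
  have hWe : star W ⬝ᵥ (fun _ => (1:ℂ)) = 0 := by
    rw [hsW, smul_dotProduct, hye]; simp
  obtain ⟨r, hr⟩ : ∃ z : ℝ, z = (ε * p).re := ⟨_, rfl⟩
  have hsum : ε * p + (starRingEnd ℂ) (ε * p) = ((2*r : ℝ) : ℂ) := by
    rw [Complex.add_conj, hr]
  have hsumC : ε * p + (starRingEnd ℂ) (ε * p) = 2*((r:ℝ):ℂ) := by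
    rw [hsum]; push_cast; ring
  have hdA : Ac * d = u - qx * p := by rw [hAc]; exact div_mul_cancel₀ _ hdne
  have hdB : Bc * d = v - qx * (starRingEnd ℂ) p := by rw [hBc]; exact div_mul_cancel₀ _ hdne
  have hcross : ε * u + (starRingEnd ℂ) ε * v
      = d * κ + qx * (ε * p + (starRingEnd ℂ) (ε * p)) := by
    rw [hκ, _root_.map_mul]
    linear_combination -ε * hdA - (starRingEnd ℂ) ε * hdB
  -- real quadratic
  obtain ⟨b', hb'⟩ : ∃ z : ℝ, z = K - 2*t*r := ⟨_, rfl⟩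
  obtain ⟨D, hDdef⟩ : ∃ z : ℝ, z = b'^2 + 4*t*(1-t) := ⟨_, rfl⟩
  have hD : 0 ≤ D := by rw [hDdef]; nlinarith [sq_nonneg b']
  obtain ⟨S, hSdef⟩ : ∃ z : ℝ, z = Real.sqrt D := ⟨_, rfl⟩
  have hS : S^2 = D := by rw [hSdef]; exact Real.sq_sqrt hD
  have hne : (1:ℝ) - t ≠ 0 := ne_of_gt (by linarith)
  obtain ⟨τ, hτ⟩ : ∃ z : ℝ, z = (S - b') / (2*(1-t)) := ⟨_, rfl⟩
  have hτq : (1-t)*τ^2 + b'*τ = t := by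
    rw [hτ]; field_simp; nlinarith [hS]
  have hkey : τ^2 + K*τ = t*(1 + 2*r*τ + τ^2) := by
    rw [hb'] at hτq; linear_combination hτq
  have hkeyC : ((τ:ℝ):ℂ)^2 + ((K:ℝ):ℂ)*((τ:ℝ):ℂ)
      = ((t:ℝ):ℂ)*(1 + 2*((r:ℝ):ℂ)*((τ:ℝ):ℂ) + ((τ:ℝ):ℂ)^2) := by
    exact_mod_cast congrArg (fun s : ℝ => (s : ℂ)) hkey
  -- the path vector
  obtain ⟨ζ, hζ⟩ : ∃ z : ι → ℂ, z = X + (τ:ℂ) • W := ⟨_, rfl⟩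
  have hsζ : star ζ = star X + (τ:ℂ) • star W := by
    funext i
    simp [hζ, Pi.star_apply, Complex.star_def, map_add, _root_.map_mul, Complex.conj_ofReal]
  have eN : star ζ ⬝ᵥ ζ = star X ⬝ᵥ X + (τ:ℂ)*(star X ⬝ᵥ W)
      + (τ:ℂ)*(star W ⬝ᵥ X) + (τ:ℂ)^2*(star W ⬝ᵥ W) := by
    rw [hsζ, hζ]
    simp only [dotProduct_add, add_dotProduct, smul_dotProduct, dotProduct_smul, smul_eq_mul]
    ring
  have hNζ : star ζ ⬝ᵥ ζ = ((1 + 2*r*τ + τ^2 : ℝ) : ℂ) := by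
    rw [eN, hNx, hNW, hpw, hwx]
    push_cast
    linear_combination (τ:ℂ) * hsumC
  have eQ : star ζ ⬝ᵥ M *ᵥ ζ = qx + (τ:ℂ)*(ε*u) + (τ:ℂ)*((starRingEnd ℂ) ε*v)
      + (τ:ℂ)^2*qy := by
    rw [hsζ, hζ]
    simp only [mulVec_add, mulVec_smul, dotProduct_add, add_dotProduct, smul_dotProduct,
      dotProduct_smul, smul_eq_mul, hsxW, hsWx, hqW, ← hqx]
    ring
  have hqζ : star ζ ⬝ᵥ M *ᵥ ζ = (qx + (t:ℂ)*d) * ((1 + 2*r*τ + τ^2 : ℝ) : ℂ) := by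
    rw [eQ]
    push_cast
    linear_combination (τ:ℂ) * hcross + (τ:ℂ)*qx*hsumC + (τ:ℂ)*d*hκK.symm + d*hkeyC
      - (τ:ℂ)^2*hdd
  -- ζ is nonzero
  have hζne : ζ ≠ 0 := by
    intro h0
    have hXW : X = -((τ:ℂ) • W) := by
      have h00 : X + (τ:ℂ) • W = 0 := by rw [← hζ]; exact h0
      exact eq_neg_of_add_eq_zero_left h00
    have h1 : star X ⬝ᵥ X = ((τ:ℂ))^2 * (star W ⬝ᵥ W) := by
      rw [hXW]
      simp only [star_neg, neg_dotProduct, dotProduct_neg, neg_neg]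
      have : star ((τ:ℂ) • W) = (τ:ℂ) • star W := by
        funext i; simp [Pi.star_apply, Complex.star_def, _root_.map_mul, Complex.conj_ofReal]
      rw [this, smul_dotProduct, dotProduct_smul]
      simp [smul_eq_mul]; ring
    have hτ1 : ((τ:ℂ))^2 = 1 := by rw [hNx, hNW] at h1; simpa using h1.symm
    have h2 : qx = ((τ:ℂ))^2 * qy := by
      rw [hqx, hXW]
      simp only [star_neg, neg_dotProduct, mulVec_neg, dotProduct_neg, neg_neg]
      have : star ((τ:ℂ) • W) = (τ:ℂ) • star W := by
        funext i; simp [Pi.star_apply, Complex.star_def, _root_.map_mul, Complex.conj_ofReal]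
      rw [this, mulVec_smul, smul_dotProduct, dotProduct_smul, hqW]
      simp [smul_eq_mul]; ring
    rw [hτ1, one_mul] at h2
    exact hd (by rw [h2]; ring)
  -- normalize
  obtain ⟨ζE, hζE⟩ : ∃ z : EuclideanSpace ℂ ι, z = (WithLp.equiv 2 (ι → ℂ)).symm ζ := ⟨_, rfl⟩
  have hζEne : ζE ≠ 0 := by
    intro h0
    apply hζne
    rw [hζE] at h0
    have := congrArg (WithLp.equiv 2 (ι → ℂ)) h0
    simpa using this
  have hcoe : (ζE : ι → ℂ) = ζ := by rw [hζE]; rfl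
  have hNR2 : star ζ ⬝ᵥ ζ = ((‖ζE‖ : ℝ):ℂ)^2 := by
    rw [hζE]; exact sdp_self _
  have hNR : ((1 + 2*r*τ + τ^2 : ℝ) : ℂ) = ((‖ζE‖^2 : ℝ) : ℂ) := by
    rw [← hNζ, hNR2]; push_cast; ring
  have hNRr : (1 + 2*r*τ + τ^2 : ℝ) = ‖ζE‖^2 := by exact_mod_cast hNR
  obtain ⟨nz, hnz⟩ : ∃ z : ℝ, z = ‖ζE‖ := ⟨_, rfl⟩
  have hnzpos : 0 < nz := by
    rw [hnz]; exact norm_pos_iff.mpr hζEne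
  have hnzne : (nz:ℂ) ≠ 0 := by
    simp [Complex.ofReal_ne_zero]; exact ne_of_gt hnzpos
  obtain ⟨co, hco⟩ : ∃ z : ℂ, z = ((nz:ℝ):ℂ)⁻¹ := ⟨_, rfl⟩
  have hNR3 : (1 + 2*r*τ + τ^2 : ℝ) = nz^2 := by rw [hnz]; exact hNRr
  have hsco : star (co • ζ) = co • star ζ := by
    funext i
    simp [Pi.star_apply, Complex.star_def, _root_.map_mul, hco, map_inv₀, Complex.conj_ofReal]
  have h1 : star (co • ζ) ⬝ᵥ (co • ζ) = 1 := by
    rw [hsco, smul_dotProduct, dotProduct_smul, hNζ, hNR3, hco]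
    have : (nz:ℂ) ≠ 0 := hnzne
    simp only [smul_eq_mul]
    push_cast
    field_simp
  have h2 : star (co • ζ) ⬝ᵥ (fun _ => (1:ℂ)) = 0 := by
    rw [hsco, smul_dotProduct, hsζ, add_dotProduct, smul_dotProduct, hxe, hWe]
    simp
  have h3 : star (co • ζ) ⬝ᵥ M *ᵥ (co • ζ) = qx + (t:ℂ)*d := by
    rw [hsco, mulVec_smul, smul_dotProduct, dotProduct_smul, hqζ, hNR3, hco]
    simp only [smul_eq_mul]
    push_cast
    rw [sq]
    field_simp
  have final : ((1:ℝ)-t) • qx + t • qy = qx + (t:ℂ)*d := by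
    rw [hdd]
    push_cast [Complex.real_smul]
    ring
  rw [final, ← h3]
  exact mem_rnr_of M _ h1 h2

/-- Row sums of the Laplacian vanish. -/
lemma lapC_mulVec_one' {m : Type*} [Fintype m] [DecidableEq m] (A : Matrix m m ℝ) :
    (Matrix.diagonal (fun i => ∑ j, A i j) - A).map (fun x => (x : ℂ)) *ᵥ (fun _ => (1:ℂ)) = 0 := by
  funext i
  have hrow : ∑ j, (Matrix.diagonal (fun i => ∑ j, A i j) - A) i j = 0 := by
    simp [Matrix.sub_apply, Matrix.diagonal_apply, Finset.sum_sub_distrib]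
  simp only [mulVec, dotProduct, Matrix.map_apply, mul_one, Pi.zero_apply]
  calc ∑ j, ((Matrix.diagonal (fun i => ∑ j, A i j) - A) i j : ℂ)
      = ((∑ j, (Matrix.diagonal (fun i => ∑ j, A i j) - A) i j : ℝ) : ℂ) := by push_cast; rfl
    _ = 0 := by rw [hrow]; simp

/-- Column sums of the Laplacian of a balanced digraph vanish. -/
lemma one_vecMul_lapC' {m : Type*} [Fintype m] [DecidableEq m] (A : Matrix m m ℝ)
    (hb : ∀ i, ∑ j, A i j = ∑ j, A j i) :
    (fun _ => (1:ℂ)) ᵥ* (Matrix.diagonal (fun i => ∑ j, A i j) - A).map (fun x => (x : ℂ)) = 0 := by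
  funext j
  have hcol : ∑ i, (Matrix.diagonal (fun i => ∑ j, A i j) - A) i j = 0 := by
    simp only [Matrix.sub_apply, Finset.sum_sub_distrib]
    rw [Finset.sum_eq_single j]
    · simp [Matrix.diagonal_apply_eq, hb j]
    · intro b _ hbj; exact Matrix.diagonal_apply_ne _ hbj
    · intro h; exact absurd (Finset.mem_univ j) h
  simp only [vecMul, dotProduct, Matrix.map_apply, one_mul, Pi.zero_apply]
  calc ∑ i, ((Matrix.diagonal (fun i => ∑ j, A i j) - A) i j : ℂ)
      = ((∑ i, (Matrix.diagonal (fun i => ∑ j, A i j) - A) i j : ℝ) : ℂ) := by push_cast; rfl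
    _ = 0 := by rw [hcol]; simp

/-- Split a dot product over a sum type. -/
lemma dot_sum_split {α β : Type*} [Fintype α] [Fintype β] (f g : (α ⊕ β) → ℂ) :
    f ⬝ᵥ g = (fun a => f (Sum.inl a)) ⬝ᵥ (fun a => g (Sum.inl a))
      + (fun b => f (Sum.inr b)) ⬝ᵥ (fun b => g (Sum.inr b)) := by
  simp [dotProduct, Fintype.sum_sum_type]

/-- Three-point convex combination with deficiency. -/
lemma combo_mem {C : Set ℂ} (hC : Convex ℝ C) (h0 : (0:ℂ) ∈ C) {w₁ w₂ : ℂ}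
    (h1 : w₁ ∈ C) (h2 : w₂ ∈ C) {t₁ t₂ : ℝ} (ht1 : 0 ≤ t₁) (ht2 : 0 ≤ t₂)
    (hsum : t₁ + t₂ ≤ 1) : t₁ • w₁ + t₂ • w₂ ∈ C := by
  have := hC.sum_mem (t := Finset.univ) (w := ![t₁, t₂, 1 - t₁ - t₂]) (z := ![w₁, w₂, 0])
    (by intro i _; fin_cases i <;> simp <;> linarith)
    (by simp [Fin.sum_univ_three])
    (by intro i _; fin_cases i <;> simpa)
  simpa [Fin.sum_univ_three] using this

/-- Normalization: the value of the quadratic form at `Y` orthogonal to ones is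
`‖Y‖² • w` for some `w` in `rnr M ∪ {0}`. -/
lemma scale_mem {m : Type*} [Fintype m] (M : Matrix m m ℂ) (Y : m → ℂ)
    (hY : star Y ⬝ᵥ (fun _ => (1:ℂ)) = 0) :
    ∃ w ∈ rnr M ∪ {0}, star Y ⬝ᵥ M *ᵥ Y
      = (‖((WithLp.equiv 2 (m → ℂ)).symm Y : EuclideanSpace ℂ m)‖^2 : ℝ) • w := by
  by_cases h0 : Y = 0
  · exact ⟨0, Or.inr rfl, by simp [h0]⟩
  · obtain ⟨YE, hYE⟩ : ∃ z : EuclideanSpace ℂ m, z = (WithLp.equiv 2 (m → ℂ)).symm Y := ⟨_, rfl⟩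
    have hYEcoe : (YE : m → ℂ) = Y := by rw [hYE]; rfl
    have hYEne : YE ≠ 0 := by
      intro hz; apply h0
      rw [hYE] at hz
      have := congrArg (WithLp.equiv 2 (m → ℂ)) hz
      simpa using this
    obtain ⟨nY, hnY⟩ : ∃ z : ℝ, z = ‖YE‖ := ⟨_, rfl⟩
    have hnYpos : 0 < nY := by rw [hnY]; exact norm_pos_iff.mpr hYEne
    have hnYne : (nY:ℂ) ≠ 0 := by
      simp only [ne_eq, Complex.ofReal_eq_zero]; exact ne_of_gt hnYpos
    have hNY : star Y ⬝ᵥ Y = ((nY:ℝ):ℂ)^2 := by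
      rw [hnY, hYE]; exact sdp_self _
    obtain ⟨g, hg⟩ : ∃ z : m → ℂ, z = ((nY:ℝ):ℂ)⁻¹ • Y := ⟨_, rfl⟩
    have hsg : star g = ((nY:ℝ):ℂ)⁻¹ • star Y := by
      rw [hg]; funext i
      simp [Pi.star_apply, Complex.star_def, _root_.map_mul, map_inv₀, Complex.conj_ofReal]
    have hg1 : star g ⬝ᵥ g = 1 := by
      rw [hsg, hg, smul_dotProduct, dotProduct_smul, hNY]
      simp only [smul_eq_mul]
      push_cast
      rw [sq]
      field_simp
    have hg2 : star g ⬝ᵥ (fun _ => (1:ℂ)) = 0 := by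
      rw [hsg, smul_dotProduct, hY]; simp
    refine ⟨star g ⬝ᵥ M *ᵥ g, Or.inl (mem_rnr_of M g hg1 hg2), ?_⟩
    rw [hsg, hg, mulVec_smul, smul_dotProduct, dotProduct_smul, ← hYE, ← hnY]
    simp only [smul_eq_mul, Complex.real_smul]
    push_cast
    rw [sq]
    field_simp

/-- For balanced digraphs `Γ₁, Γ₂`, the restricted numerical range of the
disjoint union satisfies `W_r(Γ₁ ⊔ Γ₂) = conv(W_r(Γ₁) ∪ W_r(Γ₂) ∪ {0})`. -/
theorem rnr_disjoint_union {n₁ n₂ : ℕ} (h₁ : 1 ≤ n₁) (h₂ : 1 ≤ n₂)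
    (A₁ : Matrix (Fin n₁) (Fin n₁) ℝ) (A₂ : Matrix (Fin n₂) (Fin n₂) ℝ)
    (hA₁ : IsAdj A₁) (hA₂ : IsAdj A₂) (hb₁ : Bal A₁) (hb₂ : Bal A₂) :
    rnr (Matrix.fromBlocks (lapC A₁) 0 0 (lapC A₂)) =
      convexHull ℝ (rnr (lapC A₁) ∪ rnr (lapC A₂) ∪ {0}) := by
  have hn₁pos : (0:ℝ) < n₁ := by exact_mod_cast h₁
  have hn₂pos : (0:ℝ) < n₂ := by exact_mod_cast h₂
  have hn₁ne : ((n₁:ℕ):ℂ) ≠ 0 := Nat.cast_ne_zero.mpr (by omega)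
  have hn₂ne : ((n₂:ℕ):ℂ) ≠ 0 := Nat.cast_ne_zero.mpr (by omega)
  have hL₁one : lapC A₁ *ᵥ (fun _ => (1:ℂ)) = 0 := lapC_mulVec_one' A₁
  have hL₂one : lapC A₂ *ᵥ (fun _ => (1:ℂ)) = 0 := lapC_mulVec_one' A₂
  have honeL₁ : (fun _ => (1:ℂ)) ᵥ* lapC A₁ = 0 := one_vecMul_lapC' A₁ hb₁
  have honeL₂ : (fun _ => (1:ℂ)) ᵥ* lapC A₂ = 0 := one_vecMul_lapC' A₂ hb₂
  apply Set.Subset.antisymm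
  · -- ⊆ : decomposition
    rintro z ⟨x, hx, hxe, rfl⟩
    have hNx : star (x : (Fin n₁ ⊕ Fin n₂) → ℂ) ⬝ᵥ (x : (Fin n₁ ⊕ Fin n₂) → ℂ) = 1 :=
      (norm_eq_one_iff x).1 hx
    obtain ⟨X₁, hX₁⟩ : ∃ f : Fin n₁ → ℂ, f = fun a => (x : (Fin n₁ ⊕ Fin n₂) → ℂ) (Sum.inl a) :=
      ⟨_, rfl⟩
    obtain ⟨X₂, hX₂⟩ : ∃ f : Fin n₂ → ℂ, f = fun a => (x : (Fin n₁ ⊕ Fin n₂) → ℂ) (Sum.inr a) :=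
      ⟨_, rfl⟩
    have hsplitN : star X₁ ⬝ᵥ X₁ + star X₂ ⬝ᵥ X₂ = 1 := by
      rw [← hNx, dot_sum_split (star (x : (Fin n₁ ⊕ Fin n₂) → ℂ)) _, hX₁, hX₂]; rfl
    have hsplitQ : star (x : (Fin n₁ ⊕ Fin n₂) → ℂ) ⬝ᵥ
        (Matrix.fromBlocks (lapC A₁) 0 0 (lapC A₂) *ᵥ (x : (Fin n₁ ⊕ Fin n₂) → ℂ))
        = star X₁ ⬝ᵥ lapC A₁ *ᵥ X₁ + star X₂ ⬝ᵥ lapC A₂ *ᵥ X₂ := by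
      rw [fromBlocks_mulVec, zero_mulVec, zero_mulVec, add_zero, zero_add,
        dot_sum_split (star (x : (Fin n₁ ⊕ Fin n₂) → ℂ)) _, hX₁, hX₂]
      rfl
    -- block 1 decomposition
    obtain ⟨c₁, hc₁⟩ : ∃ z : ℂ, z = (∑ i, X₁ i) / ((n₁:ℕ):ℂ) := ⟨_, rfl⟩
    obtain ⟨Y₁, hY₁⟩ : ∃ f : Fin n₁ → ℂ, f = X₁ - c₁ • (fun _ => (1:ℂ)) := ⟨_, rfl⟩
    have hsum1 : ∑ i, Y₁ i = 0 := by
      rw [hY₁]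
      simp only [Pi.sub_apply, Pi.smul_apply, smul_eq_mul, mul_one, Finset.sum_sub_distrib,
        Finset.sum_const, Finset.card_univ, Fintype.card_fin, nsmul_eq_mul, hc₁]
      field_simp
      ring
    have hY₁e : star Y₁ ⬝ᵥ (fun _ => (1:ℂ)) = 0 := by
      have h : star Y₁ ⬝ᵥ (fun _ => (1:ℂ)) = (starRingEnd ℂ) (∑ i, Y₁ i) := by
        simp [dotProduct, Pi.star_apply, Complex.star_def, map_sum]
      rw [h, hsum1, map_zero]
    have hdec1 : X₁ = Y₁ + c₁ • (fun _ => (1:ℂ)) := by rw [hY₁]; funext i; simp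
    have hsY1 : star X₁ = star Y₁ + (starRingEnd ℂ) c₁ • (fun _ => (1:ℂ)) := by
      rw [hdec1]; funext i; simp [Pi.star_apply]
    have honeY₁ : (fun _ => (1:ℂ)) ⬝ᵥ Y₁ = 0 := by
      simpa [dotProduct] using hsum1
    have hzY₁ : (fun _ => (1:ℂ)) ⬝ᵥ (lapC A₁ *ᵥ Y₁) = 0 := by
      rw [dotProduct_mulVec, honeL₁, zero_dotProduct]
    have hq1 : star X₁ ⬝ᵥ lapC A₁ *ᵥ X₁ = star Y₁ ⬝ᵥ lapC A₁ *ᵥ Y₁ := by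
      rw [hsY1]
      conv_lhs => rw [hdec1]
      rw [mulVec_add, mulVec_smul, hL₁one, smul_zero, add_zero, add_dotProduct,
        smul_dotProduct, hzY₁, smul_zero, add_zero]
    have hn1 : star X₁ ⬝ᵥ X₁ = star Y₁ ⬝ᵥ Y₁ + ((Complex.normSq c₁ * n₁ : ℝ) : ℂ) := by
      have hz1 : star Y₁ ⬝ᵥ (c₁ • (fun _ : Fin n₁ => (1:ℂ))) = 0 := by
        rw [dotProduct_smul, hY₁e, smul_zero]
      have hz2 : ((starRingEnd ℂ) c₁ • (fun _ : Fin n₁ => (1:ℂ))) ⬝ᵥ Y₁ = 0 := by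
        rw [smul_dotProduct, honeY₁, smul_zero]
      have hz3 : ((starRingEnd ℂ) c₁ • (fun _ : Fin n₁ => (1:ℂ))) ⬝ᵥ (c₁ • (fun _ : Fin n₁ => (1:ℂ)))
          = ((Complex.normSq c₁ * n₁ : ℝ) : ℂ) := by
        rw [smul_dotProduct, dotProduct_smul]
        have hone : (fun _ : Fin n₁ => (1:ℂ)) ⬝ᵥ (fun _ => (1:ℂ)) = ((n₁:ℕ):ℂ) := by
          simp [dotProduct]
        rw [hone]
        simp only [smul_eq_mul]
        rw [show (starRingEnd ℂ) c₁ * (c₁ * ((n₁:ℕ):ℂ)) = (c₁ * (starRingEnd ℂ) c₁) * ((n₁:ℕ):ℂ)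
          from by ring, Complex.mul_conj]
        push_cast
        ring
      rw [hsY1]
      conv_lhs => rw [hdec1]
      rw [dotProduct_add, add_dotProduct, add_dotProduct, hz1, hz2, hz3, add_zero, zero_add]
    -- block 2 decomposition
    obtain ⟨c₂, hc₂⟩ : ∃ z : ℂ, z = (∑ i, X₂ i) / ((n₂:ℕ):ℂ) := ⟨_, rfl⟩
    obtain ⟨Y₂, hY₂⟩ : ∃ f : Fin n₂ → ℂ, f = X₂ - c₂ • (fun _ => (1:ℂ)) := ⟨_, rfl⟩
    have hsum2 : ∑ i, Y₂ i = 0 := by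
      rw [hY₂]
      simp only [Pi.sub_apply, Pi.smul_apply, smul_eq_mul, mul_one, Finset.sum_sub_distrib,
        Finset.sum_const, Finset.card_univ, Fintype.card_fin, nsmul_eq_mul, hc₂]
      field_simp
      ring
    have hY₂e : star Y₂ ⬝ᵥ (fun _ => (1:ℂ)) = 0 := by
      have h : star Y₂ ⬝ᵥ (fun _ => (1:ℂ)) = (starRingEnd ℂ) (∑ i, Y₂ i) := by
        simp [dotProduct, Pi.star_apply, Complex.star_def, map_sum]
      rw [h, hsum2, map_zero]
    have hdec2 : X₂ = Y₂ + c₂ • (fun _ => (1:ℂ)) := by rw [hY₂]; funext i; simp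
    have hsY2 : star X₂ = star Y₂ + (starRingEnd ℂ) c₂ • (fun _ => (1:ℂ)) := by
      rw [hdec2]; funext i; simp [Pi.star_apply]
    have honeY₂ : (fun _ => (1:ℂ)) ⬝ᵥ Y₂ = 0 := by
      simpa [dotProduct] using hsum2
    have hzY₂ : (fun _ => (1:ℂ)) ⬝ᵥ (lapC A₂ *ᵥ Y₂) = 0 := by
      rw [dotProduct_mulVec, honeL₂, zero_dotProduct]
    have hq2 : star X₂ ⬝ᵥ lapC A₂ *ᵥ X₂ = star Y₂ ⬝ᵥ lapC A₂ *ᵥ Y₂ := by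
      rw [hsY2]
      conv_lhs => rw [hdec2]
      rw [mulVec_add, mulVec_smul, hL₂one, smul_zero, add_zero, add_dotProduct,
        smul_dotProduct, hzY₂, smul_zero, add_zero]
    have hn2 : star X₂ ⬝ᵥ X₂ = star Y₂ ⬝ᵥ Y₂ + ((Complex.normSq c₂ * n₂ : ℝ) : ℂ) := by
      have hz1 : star Y₂ ⬝ᵥ (c₂ • (fun _ : Fin n₂ => (1:ℂ))) = 0 := by
        rw [dotProduct_smul, hY₂e, smul_zero]
      have hz2 : ((starRingEnd ℂ) c₂ • (fun _ : Fin n₂ => (1:ℂ))) ⬝ᵥ Y₂ = 0 := by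
        rw [smul_dotProduct, honeY₂, smul_zero]
      have hz3 : ((starRingEnd ℂ) c₂ • (fun _ : Fin n₂ => (1:ℂ))) ⬝ᵥ (c₂ • (fun _ : Fin n₂ => (1:ℂ)))
          = ((Complex.normSq c₂ * n₂ : ℝ) : ℂ) := by
        rw [smul_dotProduct, dotProduct_smul]
        have hone : (fun _ : Fin n₂ => (1:ℂ)) ⬝ᵥ (fun _ => (1:ℂ)) = ((n₂:ℕ):ℂ) := by
          simp [dotProduct]
        rw [hone]
        simp only [smul_eq_mul]
        rw [show (starRingEnd ℂ) c₂ * (c₂ * ((n₂:ℕ):ℂ)) = (c₂ * (starRingEnd ℂ) c₂) * ((n₂:ℕ):ℂ)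
          from by ring, Complex.mul_conj]
        push_cast
        ring
      rw [hsY2]
      conv_lhs => rw [hdec2]
      rw [dotProduct_add, add_dotProduct, add_dotProduct, hz1, hz2, hz3, add_zero, zero_add]
    -- norms
    obtain ⟨w₁, hw₁, hqY₁⟩ := scale_mem (lapC A₁) Y₁ hY₁e
    obtain ⟨w₂, hw₂, hqY₂⟩ := scale_mem (lapC A₂) Y₂ hY₂e
    obtain ⟨t₁, ht₁⟩ : ∃ z : ℝ,
        z = ‖((WithLp.equiv 2 (Fin n₁ → ℂ)).symm Y₁ : EuclideanSpace ℂ (Fin n₁))‖^2 := ⟨_, rfl⟩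
    obtain ⟨t₂, ht₂⟩ : ∃ z : ℝ,
        z = ‖((WithLp.equiv 2 (Fin n₂ → ℂ)).symm Y₂ : EuclideanSpace ℂ (Fin n₂))‖^2 := ⟨_, rfl⟩
    have hT₁ : star Y₁ ⬝ᵥ Y₁ = ((t₁:ℝ):ℂ) := by
      rw [ht₁]
      exact (sdp_self ((WithLp.equiv 2 (Fin n₁ → ℂ)).symm Y₁)).trans (by norm_cast)
    have hT₂ : star Y₂ ⬝ᵥ Y₂ = ((t₂:ℝ):ℂ) := by
      rw [ht₂]
      exact (sdp_self ((WithLp.equiv 2 (Fin n₂ → ℂ)).symm Y₂)).trans (by norm_cast)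
    have ht₁0 : 0 ≤ t₁ := by rw [ht₁]; positivity
    have ht₂0 : 0 ≤ t₂ := by rw [ht₂]; positivity
    have hcombC : ((t₁:ℝ):ℂ) + ((Complex.normSq c₁ * n₁ : ℝ):ℂ) + ((t₂:ℝ):ℂ)
        + ((Complex.normSq c₂ * n₂ : ℝ):ℂ) = 1 := by
      rw [← hT₁, ← hT₂]
      linear_combination hsplitN - hn1 - hn2
    have hcombR : t₁ + Complex.normSq c₁ * n₁ + t₂ + Complex.normSq c₂ * n₂ = 1 := by
      exact_mod_cast hcombC
    have hle : t₁ + t₂ ≤ 1 := by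
      have g1 := mul_nonneg (Complex.normSq_nonneg c₁) hn₁pos.le
      have g2 := mul_nonneg (Complex.normSq_nonneg c₂) hn₂pos.le
      linarith
    have hstep : star (x : (Fin n₁ ⊕ Fin n₂) → ℂ) ⬝ᵥ
        (Matrix.fromBlocks (lapC A₁) 0 0 (lapC A₂) *ᵥ (x : (Fin n₁ ⊕ Fin n₂) → ℂ))
        = t₁ • w₁ + t₂ • w₂ := by
      rw [hsplitQ, hq1, hq2, hqY₁, hqY₂, ← ht₁, ← ht₂]
    rw [hstep]
    have h0S : (0:ℂ) ∈ convexHull ℝ (rnr (lapC A₁) ∪ rnr (lapC A₂) ∪ {0}) :=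
      subset_convexHull ℝ _ (Or.inr rfl)
    have hw₁S : w₁ ∈ convexHull ℝ (rnr (lapC A₁) ∪ rnr (lapC A₂) ∪ {0}) := by
      rcases hw₁ with h | h
      · exact subset_convexHull ℝ _ (Or.inl (Or.inl h))
      · rw [h]; exact h0S
    have hw₂S : w₂ ∈ convexHull ℝ (rnr (lapC A₁) ∪ rnr (lapC A₂) ∪ {0}) := by
      rcases hw₂ with h | h
      · exact subset_convexHull ℝ _ (Or.inl (Or.inr h))
      · rw [h]; exact h0S
    exact combo_mem (convex_convexHull ℝ _) h0S hw₁S hw₂S ht₁0 ht₂0 hle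
  · -- ⊇ : embeddings and convexity
    apply convexHull_min ?_ (rnr_convex _)
    rintro w hw
    rcases hw with (hw | hw) | hw
    · -- rnr L₁ ⊆ rnr L
      obtain ⟨x, hx, hxe, rfl⟩ := hw
      obtain ⟨X, hX⟩ : ∃ g : Fin n₁ → ℂ, (x : Fin n₁ → ℂ) = g := ⟨_, rfl⟩
      rw [hX]
      rw [hX] at hxe
      have hx1 : star X ⬝ᵥ X = 1 := by rw [← hX]; exact (norm_eq_one_iff x).1 hx
      obtain ⟨f, hf⟩ : ∃ g : (Fin n₁ ⊕ Fin n₂) → ℂ, g = Sum.elim X (0 : Fin n₂ → ℂ) := ⟨_, rfl⟩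
      have hsfl : (fun a => star f (Sum.inl a)) = star X := by rw [hf]; rfl
      have hsfr : (fun b => star f (Sum.inr b)) = (0 : Fin n₂ → ℂ) := by
        rw [hf]; funext b; simp [Pi.star_apply]
      have h1 : star f ⬝ᵥ f = 1 := by
        rw [dot_sum_split (star f) f, hsfl, hsfr, hf]
        simpa using hx1
      have h2 : star f ⬝ᵥ (fun _ => (1:ℂ)) = 0 := by
        rw [dot_sum_split (star f) _, hsfl, hsfr]
        simpa using hxe
      have hmv : Matrix.fromBlocks (lapC A₁) 0 0 (lapC A₂) *ᵥ f
          = Sum.elim (lapC A₁ *ᵥ X) (0 : Fin n₂ → ℂ) := by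
        rw [fromBlocks_mulVec, hf]
        simp
      have hv : star f ⬝ᵥ (Matrix.fromBlocks (lapC A₁) 0 0 (lapC A₂) *ᵥ f)
          = star X ⬝ᵥ lapC A₁ *ᵥ X := by
        rw [hmv, dot_sum_split (star f) _, hsfl, hsfr]
        simp
      rw [← hv]
      exact mem_rnr_of _ f h1 h2
    · -- rnr L₂ ⊆ rnr L
      obtain ⟨x, hx, hxe, rfl⟩ := hw
      obtain ⟨X, hX⟩ : ∃ g : Fin n₂ → ℂ, (x : Fin n₂ → ℂ) = g := ⟨_, rfl⟩
      rw [hX]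
      rw [hX] at hxe
      have hx1 : star X ⬝ᵥ X = 1 := by rw [← hX]; exact (norm_eq_one_iff x).1 hx
      obtain ⟨f, hf⟩ : ∃ g : (Fin n₁ ⊕ Fin n₂) → ℂ, g = Sum.elim (0 : Fin n₁ → ℂ) X := ⟨_, rfl⟩
      have hsfr : (fun b => star f (Sum.inr b)) = star X := by rw [hf]; rfl
      have hsfl : (fun a => star f (Sum.inl a)) = (0 : Fin n₁ → ℂ) := by
        rw [hf]; funext a; simp [Pi.star_apply]
      have h1 : star f ⬝ᵥ f = 1 := by
        rw [dot_sum_split (star f) f, hsfl, hsfr, hf]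
        simpa using hx1
      have h2 : star f ⬝ᵥ (fun _ => (1:ℂ)) = 0 := by
        rw [dot_sum_split (star f) _, hsfl, hsfr]
        simpa using hxe
      have hmv : Matrix.fromBlocks (lapC A₁) 0 0 (lapC A₂) *ᵥ f
          = Sum.elim (0 : Fin n₁ → ℂ) (lapC A₂ *ᵥ X) := by
        rw [fromBlocks_mulVec, hf]
        simp
      have hv : star f ⬝ᵥ (Matrix.fromBlocks (lapC A₁) 0 0 (lapC A₂) *ᵥ f)
          = star X ⬝ᵥ lapC A₂ *ᵥ X := by
        rw [hmv, dot_sum_split (star f) _, hsfl, hsfr]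
        simp
      rw [← hv]
      exact mem_rnr_of _ f h1 h2
    · -- 0 ∈ rnr L
      rw [Set.mem_singleton_iff] at hw
      subst hw
      obtain ⟨f, hf⟩ : ∃ g : (Fin n₁ ⊕ Fin n₂) → ℂ,
          g = Sum.elim (fun _ : Fin n₁ => ((n₂:ℝ):ℂ)) (fun _ : Fin n₂ => (-(n₁:ℝ):ℂ)) := ⟨_, rfl⟩
      have hsf : star f = f := by
        rw [hf]; funext i; cases i <;>
          simp [Pi.star_apply, Complex.conj_ofReal]
      obtain ⟨NR, hNRdef⟩ : ∃ z : ℝ, z = (n₂:ℝ)^2*(n₁:ℝ) + (n₁:ℝ)^2*(n₂:ℝ) := ⟨_, rfl⟩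
      have hNR : star f ⬝ᵥ f = ((NR:ℝ):ℂ) := by
        rw [hsf, dot_sum_split f f, hf, hNRdef]
        simp only [Sum.elim_inl, Sum.elim_inr, dotProduct, Finset.sum_const,
          Finset.card_univ, Fintype.card_fin, nsmul_eq_mul]
        push_cast
        ring
      have hNRpos : 0 < NR := by
        rw [hNRdef]
        nlinarith [mul_pos (pow_pos hn₂pos 2) hn₁pos, mul_pos (pow_pos hn₁pos 2) hn₂pos]
      obtain ⟨sR, hsR⟩ : ∃ z : ℝ, z = Real.sqrt NR := ⟨_, rfl⟩
      have hs2 : sR^2 = NR := by rw [hsR]; exact Real.sq_sqrt hNRpos.le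
      have hspos : 0 < sR := by rw [hsR]; exact Real.sqrt_pos.mpr hNRpos
      have hsne : ((sR:ℝ):ℂ) ≠ 0 := by
        simp only [ne_eq, Complex.ofReal_eq_zero]; exact ne_of_gt hspos
      obtain ⟨g, hg⟩ : ∃ z : (Fin n₁ ⊕ Fin n₂) → ℂ, z = ((sR:ℝ):ℂ)⁻¹ • f := ⟨_, rfl⟩
      have hsg : star g = ((sR:ℝ):ℂ)⁻¹ • star f := by
        rw [hg]; funext i
        simp [Pi.star_apply, Complex.star_def, _root_.map_mul, map_inv₀, Complex.conj_ofReal]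
      have h1 : star g ⬝ᵥ g = 1 := by
        rw [hsg, hg, smul_dotProduct, dotProduct_smul, hNR, ← hs2]
        simp only [smul_eq_mul]
        push_cast
        rw [sq]
        field_simp
      have hfe : star f ⬝ᵥ (fun _ => (1:ℂ)) = 0 := by
        rw [hsf, dot_sum_split f _, hf]
        simp only [Sum.elim_inl, Sum.elim_inr, dotProduct, Finset.sum_const,
          Finset.card_univ, Fintype.card_fin, nsmul_eq_mul, mul_one]
        push_cast
        ring
      have h2 : star g ⬝ᵥ (fun _ => (1:ℂ)) = 0 := by
        rw [hsg, smul_dotProduct, hfe, smul_zero]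
      have hc1 : lapC A₁ *ᵥ (fun _ : Fin n₁ => ((n₂:ℝ):ℂ)) = 0 := by
        have hconst : (fun _ : Fin n₁ => ((n₂:ℝ):ℂ)) = ((n₂:ℝ):ℂ) • (fun _ => (1:ℂ)) := by
          funext i; simp
        rw [hconst, mulVec_smul, hL₁one, smul_zero]
      have hc2 : lapC A₂ *ᵥ (fun _ : Fin n₂ => (-(n₁:ℝ):ℂ)) = 0 := by
        have hconst : (fun _ : Fin n₂ => (-(n₁:ℝ):ℂ)) = (-(n₁:ℝ):ℂ) • (fun _ => (1:ℂ)) := by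
          funext i; simp
        rw [hconst, mulVec_smul, hL₂one, smul_zero]
      have hmv : Matrix.fromBlocks (lapC A₁) 0 0 (lapC A₂) *ᵥ f = 0 := by
        rw [hf, fromBlocks_mulVec]
        simp only [Sum.elim_comp_inl, Sum.elim_comp_inr, zero_mulVec, add_zero, zero_add,
          hc1, hc2]
        funext i; cases i <;> simp
      have hval : star g ⬝ᵥ (Matrix.fromBlocks (lapC A₁) 0 0 (lapC A₂) *ᵥ g) = 0 := by
        rw [hg, mulVec_smul, hmv, smul_zero, dotProduct_zero]
      rw [← hval]
      exact mem_rnr_of _ g h1 h2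
end

section
/- Let Γ be a digraph of order n with Laplacian L, and let Q be a restrictor matrix of order n. Then L is a normal matrix if and only if QᴴLQ is a normal matrix and Γ is balanced. -/
open Matrix

/-- all-ones complex matrix -/
def Jc (n : ℕ) : Matrix (Fin n) (Fin n) ℂ := Matrix.of fun _ _ => 1

lemma Jc_conjTranspose (n : ℕ) : (Jc n)ᴴ = Jc n := by
  ext i j; simp [Jc]

lemma restrictor_mul_conjTranspose {n : ℕ} (hn : 0 < n)
    (Q : Matrix (Fin n) (Fin (n - 1)) ℂ) (hQ : IsRestrictor Q) :
    Q * Qᴴ = 1 - ((n : ℂ))⁻¹ • Jc n := by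
  obtain ⟨h1, h2⟩ := hQ
  set c : ℂ := ((Real.sqrt n : ℝ) : ℂ)⁻¹ with hc
  have hns : (0:ℝ) ≤ (n:ℝ) := by positivity
  have hcc : c * c = ((n : ℂ))⁻¹ := by
    rw [hc, ← mul_inv, ← Complex.ofReal_mul, Real.mul_self_sqrt hns]
    push_cast
    ring
  have hcstar : star c = c := by
    rw [hc]; simp
  set v : Matrix (Fin n) Unit ℂ := Matrix.of fun _ _ => c with hv
  have hcsum : ∀ j, ∑ i, star (Q i j) = 0 := by
    intro j
    have := congrFun h2 j
    simpa [Matrix.mulVec, dotProduct, conjTranspose_apply] using this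
  have hsum : ∀ j, ∑ i, Q i j = 0 := by
    intro j
    have := congrArg Star.star (hcsum j)
    simpa [star_sum, star_star] using this
  have hQv : Qᴴ * v = 0 := by
    ext j u
    simp only [mul_apply, conjTranspose_apply, hv, of_apply, Matrix.zero_apply]
    rw [← Finset.sum_mul, hcsum j, zero_mul]
  have hvQ : vᴴ * Q = 0 := by
    ext u j
    simp only [mul_apply, conjTranspose_apply, hv, of_apply, Matrix.zero_apply]
    rw [← Finset.mul_sum, hsum j, mul_zero]
  have hvv : vᴴ * v = 1 := by
    ext u u'
    simp only [mul_apply, conjTranspose_apply, hv, of_apply, hcstar]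
    rw [Finset.sum_const, Finset.card_univ]
    have : ((n:ℂ)) ≠ 0 := by
      exact_mod_cast Nat.cast_ne_zero.mpr hn.ne'
    simp only [Fintype.card_fin, nsmul_eq_mul, hcc, mul_inv_cancel₀ this]
    cases u; cases u'
    simp [Matrix.one_apply]
  have hrows : fromRows Qᴴ vᴴ * fromCols Q v = 1 := by
    rw [fromRows_mul_fromCols, hQv, hvQ, hvv, h1, fromBlocks_one]
  have e : Fin n ≃ (Fin (n-1)) ⊕ Unit := by
    apply Fintype.equivOfCardEq
    simp [Nat.sub_add_cancel hn]
  have hcols : fromCols Q v * fromRows Qᴴ vᴴ = 1 :=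
    (fromCols_mul_fromRows_eq_one_comm e Q v Qᴴ vᴴ).mpr hrows
  rw [fromCols_mul_fromRows] at hcols
  have hvvH : v * vᴴ = ((n : ℂ))⁻¹ • Jc n := by
    ext i j
    simp [hv, mul_apply, conjTranspose_apply, hcstar, hcc, Jc]
  rw [hvvH] at hcols
  linear_combination (norm := abel) hcols

lemma sum_swap3 {α : Type*} [AddCommMonoid α] {n : ℕ} (f : Fin n → Fin n → Fin n → α) :
    (∑ j, ∑ i, ∑ k, f j i k) = ∑ i, ∑ k, ∑ j, f j i k := by
  rw [Finset.sum_comm]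
  exact Finset.sum_congr rfl fun i _ => Finset.sum_comm

lemma lap_rowsum {n : ℕ} [DecidableEq (Fin n)] (A : Matrix (Fin n) (Fin n) ℝ) (i : Fin n) :
    ∑ j, lap A i j = 0 := by
  simp [lap, Finset.sum_sub_distrib, Matrix.diagonal_apply]

lemma lap_colsum {n : ℕ} (A : Matrix (Fin n) (Fin n) ℝ) (j : Fin n) :
    ∑ i, lap A i j = (∑ l, A j l) - ∑ i, A i j := by
  simp [lap, Finset.sum_sub_distrib, Matrix.diagonal_apply]

lemma bal_iff_colsum {n : ℕ} (A : Matrix (Fin n) (Fin n) ℝ) :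
    Bal A ↔ ∀ j, ∑ i, lap A i j = 0 := by
  constructor
  · intro hb j; rw [lap_colsum, hb j, sub_self]
  · intro h j
    have := h j
    rw [lap_colsum] at this
    linarith

lemma star_lap {n : ℕ} (A : Matrix (Fin n) (Fin n) ℝ) : star (lap A) = (lap A)ᵀ := by
  ext i j; simp [Matrix.star_apply]

lemma lapC_conjTranspose {n : ℕ} (A : Matrix (Fin n) (Fin n) ℝ) :
    (lapC A)ᴴ = ((lap A)ᵀ).map (fun x => (x : ℂ)) := by
  ext i j
  simp [lapC, conjTranspose_apply, Matrix.map_apply, Complex.conj_ofReal]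

lemma normal_real_iff_complex {n : ℕ} (A : Matrix (Fin n) (Fin n) ℝ) :
    IsNormalM (lap A) ↔ (lapC A)ᴴ * lapC A = lapC A * (lapC A)ᴴ := by
  have hmap : ∀ M N : Matrix (Fin n) (Fin n) ℝ,
      (M.map (fun x => (x:ℂ))) * (N.map (fun x => (x:ℂ))) = (M * N).map (fun x => (x:ℂ)) := by
    intro M N
    exact (Matrix.map_mul (f := Complex.ofRealHom)).symm
  rw [lapC_conjTranspose]
  unfold lapC
  rw [hmap, hmap]
  unfold IsNormalM
  rw [star_lap]
  constructor
  · intro h; rw [h]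
  · intro h
    exact Matrix.map_injective Complex.ofReal_injective h

lemma lapC_mul_Jc {n : ℕ} (A : Matrix (Fin n) (Fin n) ℝ) : lapC A * Jc n = 0 := by
  ext i j
  simp only [mul_apply, lapC, Jc, Matrix.map_apply, of_apply, mul_one, Matrix.zero_apply]
  rw [← Complex.ofReal_sum]
  norm_cast
  exact lap_rowsum A i

lemma Jc_mul_lapC {n : ℕ} (A : Matrix (Fin n) (Fin n) ℝ) (hb : Bal A) : Jc n * lapC A = 0 := by
  ext i j
  simp only [mul_apply, lapC, Jc, Matrix.map_apply, of_apply, one_mul, Matrix.zero_apply]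
  rw [← Complex.ofReal_sum]
  norm_cast
  exact (bal_iff_colsum A).mp hb j

lemma balanced_of_normal {n : ℕ} (A : Matrix (Fin n) (Fin n) ℝ)
    (h : IsNormalM (lap A)) : Bal A := by
  set L := lap A with hL
  have hstar : star L = Lᵀ := star_lap A
  have hnorm : Lᵀ * L = L * Lᵀ := by rw [← hstar]; exact h
  have key : ∑ j, (∑ i, L i j)^2 = ∑ j, (∑ i, L j i)^2 := by
    have e1 : ∑ j, (∑ i, L i j)^2 = ∑ i, ∑ k, (L * Lᵀ) i k := by
      simp only [sq, Finset.sum_mul_sum, mul_apply, transpose_apply]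
      exact sum_swap3 (fun j i k => L i j * L k j)
    have e2 : ∑ j, (∑ i, L j i)^2 = ∑ i, ∑ k, (Lᵀ * L) i k := by
      simp only [sq, Finset.sum_mul_sum, mul_apply, transpose_apply]
      exact sum_swap3 (fun j i k => L j i * L j k)
    rw [e1, e2, hnorm]
  have hrs : ∀ j, (∑ i, L j i) = 0 := fun j => lap_rowsum A j
  have hzero : ∑ j, (∑ i, L i j)^2 = 0 := by
    rw [key]
    apply Finset.sum_eq_zero
    intro j _
    rw [hrs j]; ring
  have hcol : ∀ j, ∑ i, L i j = 0 := by
    intro j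
    have h0 := (Finset.sum_eq_zero_iff_of_nonneg (fun i _ => sq_nonneg _)).mp hzero j
      (Finset.mem_univ j)
    exact pow_eq_zero_iff (by norm_num) |>.mp h0
  exact (bal_iff_colsum A).mpr hcol

/-- `L` is normal iff `QᴴLQ` is normal and `Γ` is balanced. -/
theorem normal_iff_restricted_normal_and_balanced {n : ℕ}
    (A : Matrix (Fin n) (Fin n) ℝ) (hA : IsAdj A)
    (Q : Matrix (Fin n) (Fin (n - 1)) ℂ) (hQ : IsRestrictor Q) :
    IsNormalM (lap A) ↔ (IsNormalM (Qᴴ * lapC A * Q) ∧ Bal A) := by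
  rcases Nat.eq_zero_or_pos n with rfl | hn
  · constructor
    · intro _
      refine ⟨?_, fun i => i.elim0⟩
      unfold IsNormalM
      ext i j; exact i.elim0
    · intro _
      unfold IsNormalM
      ext i j; exact i.elim0
  set M := lapC A with hM
  have hQQ : Q * Qᴴ = 1 - ((n : ℂ))⁻¹ • Jc n := restrictor_mul_conjTranspose hn Q hQ
  have hMJ : M * Jc n = 0 := lapC_mul_Jc A
  have hJMH : Jc n * Mᴴ = 0 := by
    have := congrArg conjTranspose hMJ
    rwa [conjTranspose_mul, Jc_conjTranspose, conjTranspose_zero] at this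
  have hstarM : star (Qᴴ * M * Q) = Qᴴ * Mᴴ * Q := by
    show (Qᴴ * M * Q)ᴴ = _
    rw [conjTranspose_mul, conjTranspose_mul, conjTranspose_conjTranspose, Matrix.mul_assoc]
  constructor
  · intro h
    have hb : Bal A := balanced_of_normal A h
    have hJM : Jc n * M = 0 := Jc_mul_lapC A hb
    have hMHJ : Mᴴ * Jc n = 0 := by
      have := congrArg conjTranspose hJM
      rwa [conjTranspose_mul, Jc_conjTranspose, conjTranspose_zero] at this
    have hnorm : Mᴴ * M = M * Mᴴ := (normal_real_iff_complex A).mp h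
    refine ⟨?_, hb⟩
    unfold IsNormalM
    rw [hstarM]
    calc Qᴴ * Mᴴ * Q * (Qᴴ * M * Q)
        = Qᴴ * Mᴴ * (Q * Qᴴ) * M * Q := by
          simp only [Matrix.mul_assoc]
      _ = Qᴴ * (Mᴴ * M) * Q := by
          rw [hQQ, Matrix.mul_sub, Matrix.sub_mul, Matrix.sub_mul, Matrix.mul_one,
            Matrix.mul_smul, Matrix.smul_mul, Matrix.smul_mul]
          rw [show Qᴴ * Mᴴ * Jc n = 0 by rw [Matrix.mul_assoc, hMHJ, Matrix.mul_zero]]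
          simp [Matrix.mul_assoc]
      _ = Qᴴ * (M * Mᴴ) * Q := by rw [hnorm]
      _ = Qᴴ * M * (Q * Qᴴ) * Mᴴ * Q := by
          rw [hQQ, Matrix.mul_sub, Matrix.sub_mul, Matrix.sub_mul, Matrix.mul_one,
            Matrix.mul_smul, Matrix.smul_mul, Matrix.smul_mul]
          rw [show Qᴴ * M * Jc n = 0 by rw [Matrix.mul_assoc, hMJ, Matrix.mul_zero]]
          simp [Matrix.mul_assoc]
      _ = Qᴴ * M * Q * (Qᴴ * Mᴴ * Q) := by
          simp only [Matrix.mul_assoc]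
  · rintro ⟨h, hb⟩
    have hJM : Jc n * M = 0 := Jc_mul_lapC A hb
    have hMHJ : Mᴴ * Jc n = 0 := by
      have := congrArg conjTranspose hJM
      rwa [conjTranspose_mul, Jc_conjTranspose, conjTranspose_zero] at this
    have hPM : (1 - ((n : ℂ))⁻¹ • Jc n) * M = M := by
      rw [Matrix.sub_mul, Matrix.one_mul, Matrix.smul_mul, hJM, smul_zero, sub_zero]
    have hMP : M * (1 - ((n : ℂ))⁻¹ • Jc n) = M := by
      rw [Matrix.mul_sub, Matrix.mul_one, Matrix.mul_smul, hMJ, smul_zero, sub_zero]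
    have hPMH : (1 - ((n : ℂ))⁻¹ • Jc n) * Mᴴ = Mᴴ := by
      rw [Matrix.sub_mul, Matrix.one_mul, Matrix.smul_mul, hJMH, smul_zero, sub_zero]
    have hMHP : Mᴴ * (1 - ((n : ℂ))⁻¹ • Jc n) = Mᴴ := by
      rw [Matrix.mul_sub, Matrix.mul_one, Matrix.mul_smul, hMHJ, smul_zero, sub_zero]
    unfold IsNormalM at h
    rw [hstarM] at h
    have hmid : Qᴴ * (Mᴴ * M) * Q = Qᴴ * (M * Mᴴ) * Q := by
      calc Qᴴ * (Mᴴ * M) * Q = Qᴴ * Mᴴ * (Q * Qᴴ) * M * Q := by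
            rw [hQQ]
            simp only [Matrix.mul_assoc]
            rw [show (1 - ((n : ℂ))⁻¹ • Jc n) * (M * Q) = M * Q by
              rw [← Matrix.mul_assoc, hPM]]
        _ = Qᴴ * M * (Q * Qᴴ) * Mᴴ * Q := by
            simp only [Matrix.mul_assoc] at h ⊢
            exact h
        _ = Qᴴ * (M * Mᴴ) * Q := by
            rw [hQQ]
            simp only [Matrix.mul_assoc]
            rw [show (1 - ((n : ℂ))⁻¹ • Jc n) * (Mᴴ * Q) = Mᴴ * Q by
              rw [← Matrix.mul_assoc, hPMH]]
    have hfull : (Q * Qᴴ) * (Mᴴ * M) * (Q * Qᴴ) = (Q * Qᴴ) * (M * Mᴴ) * (Q * Qᴴ) := by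
      calc (Q * Qᴴ) * (Mᴴ * M) * (Q * Qᴴ)
          = Q * (Qᴴ * (Mᴴ * M) * Q) * Qᴴ := by simp only [Matrix.mul_assoc]
        _ = Q * (Qᴴ * (M * Mᴴ) * Q) * Qᴴ := by rw [hmid]
        _ = (Q * Qᴴ) * (M * Mᴴ) * (Q * Qᴴ) := by simp only [Matrix.mul_assoc]
    rw [hQQ] at hfull
    have habs1 : (1 - ((n : ℂ))⁻¹ • Jc n) * (Mᴴ * M) * (1 - ((n : ℂ))⁻¹ • Jc n) = Mᴴ * M := by
      rw [← Matrix.mul_assoc, hPMH, Matrix.mul_assoc, hMP]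
    have habs2 : (1 - ((n : ℂ))⁻¹ • Jc n) * (M * Mᴴ) * (1 - ((n : ℂ))⁻¹ • Jc n) = M * Mᴴ := by
      rw [← Matrix.mul_assoc, hPM, Matrix.mul_assoc, hMHP]
    rw [habs1, habs2] at hfull
    exact (normal_real_iff_complex A).mpr hfull
end

section
/- Let Γ be a digraph of order n with adjacency matrix A = [a_ij] and Laplacian L. Then L is a normal matrix if and only if Γ is balanced and for all pairs of distinct vertices i ≠ j one has (a_ij − a_ji)·(d⁺(j) − d⁺(i)) = Σ_{k ≠ i, k ≠ j} (a_ik·a_jk − a_ki·a_kj). -/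
open Matrix

lemma sum_split_two {n : ℕ} (i j : Fin n) (hij : i ≠ j) (f : Fin n → ℝ) :
    ∑ k, f k = f i + f j + ∑ k ∈ Finset.univ.filter (fun k => k ≠ i ∧ k ≠ j), f k := by
  have h1 : Finset.univ.filter (fun k => k ≠ i ∧ k ≠ j)
      = (Finset.univ.erase i).erase j := by
    ext k; simp [Finset.mem_erase, and_comm]
  rw [h1, ← Finset.add_sum_erase _ f (Finset.mem_univ i),
    ← Finset.add_sum_erase _ f (Finset.mem_erase.mpr ⟨hij.symm, Finset.mem_univ j⟩)]
  ring

/-- `L` is normal iff `Γ` is balanced and for all distinct vertices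
`i ≠ j`, `(a_ij - a_ji)(d⁺(j) - d⁺(i)) = ∑_{k ≠ i,j} (a_ik a_jk - a_ki a_kj)`. -/
theorem normal_iff_balanced_and_identity {n : ℕ}
    (A : Matrix (Fin n) (Fin n) ℝ) (hA : IsAdj A) :
    IsNormalM (lap A) ↔
      (Bal A ∧ ∀ i j, i ≠ j →
        (A i j - A j i) * ((∑ k, A j k) - (∑ k, A i k)) =
          ∑ k ∈ Finset.univ.filter (fun k => k ≠ i ∧ k ≠ j),
            (A i k * A j k - A k i * A k j)) := by
  obtain ⟨h01, hdiag⟩ := hA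
  have hsq : ∀ i j, A i j * A i j = A i j := by
    intro i j; rcases h01 i j with h | h <;> simp [h]
  have hL : ∀ i j, lap A i j = if i = j then (∑ k, A i k) else -A i j := by
    intro i j
    simp only [lap, Matrix.sub_apply, Matrix.diagonal_apply]
    split_ifs with h
    · subst h; simp [hdiag i]
    · ring
  have key : IsNormalM (lap A) ↔
      ∀ i j, ∑ k, lap A k i * lap A k j = ∑ k, lap A i k * lap A j k := by
    unfold IsNormalM
    constructor
    · intro h i j
      have := congrFun (congrFun h i) j
      simpa [Matrix.mul_apply, Matrix.star_apply, mul_comm] using this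
    · intro h
      ext i j
      simpa [Matrix.mul_apply, Matrix.star_apply, mul_comm] using h i j
  rw [key]
  have hdiagEq : ∀ i, (∑ k, lap A k i * lap A k i = ∑ k, lap A i k * lap A i k) ↔
      (∑ k, A i k = ∑ k, A k i) := by
    intro i
    have e1 : ∑ k, lap A k i * lap A k i = (∑ k, A i k) ^ 2 + ∑ k, A k i := by
      rw [← Finset.add_sum_erase _ (fun k => lap A k i * lap A k i) (Finset.mem_univ i)]
      have c : ∑ k ∈ Finset.univ.erase i, lap A k i * lap A k i
          = ∑ k ∈ Finset.univ.erase i, A k i :=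
        Finset.sum_congr rfl fun k hk => by
          rw [hL, if_neg (Finset.mem_erase.mp hk).1, neg_mul_neg, hsq]
      rw [c, hL i i, if_pos rfl,
        ← Finset.add_sum_erase _ (fun k => A k i) (Finset.mem_univ i), hdiag i]
      ring
    have e2 : ∑ k, lap A i k * lap A i k = (∑ k, A i k) ^ 2 + ∑ k, A i k := by
      rw [← Finset.add_sum_erase _ (fun k => lap A i k * lap A i k) (Finset.mem_univ i)]
      have c : ∑ k ∈ Finset.univ.erase i, lap A i k * lap A i k
          = ∑ k ∈ Finset.univ.erase i, A i k :=
        Finset.sum_congr rfl fun k hk => by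
          rw [hL, if_neg (Ne.symm (Finset.mem_erase.mp hk).1), neg_mul_neg, hsq]
      rw [c, hL i i, if_pos rfl,
        ← Finset.add_sum_erase _ (fun k => A i k) (Finset.mem_univ i), hdiag i]
      ring
    rw [e1, e2]
    constructor <;> intro h <;> linarith
  have hoff : ∀ i j, i ≠ j →
      ((∑ k, lap A k i * lap A k j = ∑ k, lap A i k * lap A j k) ↔
        (A i j - A j i) * ((∑ k, A j k) - (∑ k, A i k)) =
          ∑ k ∈ Finset.univ.filter (fun k => k ≠ i ∧ k ≠ j),
            (A i k * A j k - A k i * A k j)) := by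
    intro i j hij
    have c1 : ∑ k ∈ Finset.univ.filter (fun k => k ≠ i ∧ k ≠ j),
        lap A k i * lap A k j
        = ∑ k ∈ Finset.univ.filter (fun k => k ≠ i ∧ k ≠ j), A k i * A k j :=
      Finset.sum_congr rfl fun k hk => by
        have hk' := (Finset.mem_filter.mp hk).2
        rw [hL, hL, if_neg hk'.1, if_neg hk'.2, neg_mul_neg]
    have c2 : ∑ k ∈ Finset.univ.filter (fun k => k ≠ i ∧ k ≠ j),
        lap A i k * lap A j k
        = ∑ k ∈ Finset.univ.filter (fun k => k ≠ i ∧ k ≠ j), A i k * A j k :=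
      Finset.sum_congr rfl fun k hk => by
        have hk' := (Finset.mem_filter.mp hk).2
        rw [hL, hL, if_neg (Ne.symm hk'.1), if_neg (Ne.symm hk'.2), neg_mul_neg]
    rw [sum_split_two i j hij (fun k => lap A k i * lap A k j),
      sum_split_two i j hij (fun k => lap A i k * lap A j k), c1, c2,
      hL i i, hL j j, hL i j, hL j i, if_pos rfl, if_pos rfl, if_neg hij,
      if_neg (Ne.symm hij), Finset.sum_sub_distrib]
    constructor <;> intro h <;> linear_combination h
  constructor
  · intro h
    exact ⟨fun i => (hdiagEq i).mp (h i i), fun i j hij => (hoff i j hij).mp (h i j)⟩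
  · rintro ⟨hb, hid⟩ i j
    by_cases hij : i = j
    · subst hij; exact (hdiagEq i).mpr (hb i)
    · exact (hoff i j hij).mpr (hid i j hij)
end
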